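/- arXiv:1212.6206 — 10 statements merged into one kernel-verified Lean document; each statement's English description precedes it below -/
import Mathlib

section
/- Let a > b > 0, let r, θ : ℝ → ℝ be twice continuously differentiable functions satisfying the torus geodesic equations, and let γ(λ) = Φ(r(λ), θ(λ)) be the corresponding curve in ℝ³. Then for every λ ∈ ℝ the third (z-) component of the cross product γ(λ) × γ'(λ) equals (a + b·cos(r(λ)/b))²·θ'(λ), and this quantity is constant in λ, equal to the angular momentum ℓ = (a + b·cos(r(0)/b))²·θ'(0). -/
/-- The z-component of γ × γ' for the torus curve γ = Φ(r,θ) equals `R(r)² θ'`,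
and this angular momentum is conserved along geodesics. -/
theorem torus_geodesic_angular_momentum
    (a b : ℝ) (hb : 0 < b) (hab : b < a)
    (r θ : ℝ → ℝ) (hr : ContDiff ℝ 2 r) (hθ : ContDiff ℝ 2 θ)
    (hgeo : ∀ t : ℝ,
      deriv (deriv r) t =
        -Real.sin (r t / b) * (a + b * Real.cos (r t / b)) * (deriv θ t) ^ 2 ∧
      deriv (deriv θ) t =
        (2 * Real.sin (r t / b) / (a + b * Real.cos (r t / b))) * deriv r t * deriv θ t) :
    ∀ t : ℝ,
      ((a + b * Real.cos (r t / b)) * Real.cos (θ t)) *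
          deriv (fun s => (a + b * Real.cos (r s / b)) * Real.sin (θ s)) t -
        ((a + b * Real.cos (r t / b)) * Real.sin (θ t)) *
          deriv (fun s => (a + b * Real.cos (r s / b)) * Real.cos (θ s)) t =
        (a + b * Real.cos (r t / b)) ^ 2 * deriv θ t ∧
      (a + b * Real.cos (r t / b)) ^ 2 * deriv θ t =
        (a + b * Real.cos (r 0 / b)) ^ 2 * deriv θ 0 := by
  have hbne : b ≠ 0 := ne_of_gt hb
  have hRpos : ∀ t, 0 < a + b * Real.cos (r t / b) := by
    intro t
    nlinarith [Real.neg_one_le_cos (r t / b)]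
  have hrd : Differentiable ℝ r := hr.differentiable (by norm_num)
  have hθd : Differentiable ℝ θ := hθ.differentiable (by norm_num)
  have hrd' : Differentiable ℝ (deriv r) := by
    have := (contDiff_succ_iff_deriv.mp (show ContDiff ℝ (1+1) r by norm_num; exact hr)).2.2
    exact this.differentiable one_ne_zero
  have hθd' : Differentiable ℝ (deriv θ) := by
    have := (contDiff_succ_iff_deriv.mp (show ContDiff ℝ (1+1) θ by norm_num; exact hθ)).2.2
    exact this.differentiable one_ne_zero
  -- derivative of R ∘ r
  have hf : ∀ t, HasDerivAt (fun s => a + b * Real.cos (r s / b))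
      (-Real.sin (r t / b) * deriv r t) t := by
    intro t
    have h1 : HasDerivAt (fun s => r s / b) (deriv r t / b) t :=
      (hrd t).hasDerivAt.div_const b
    have h2 := (h1.cos).const_mul b
    have h3 := h2.const_add a
    refine h3.congr_deriv ?_
    field_simp
  have hsin : ∀ t, HasDerivAt (fun s => Real.sin (θ s)) (Real.cos (θ t) * deriv θ t) t :=
    fun t => (hθd t).hasDerivAt.sin
  have hcos : ∀ t, HasDerivAt (fun s => Real.cos (θ s)) (-Real.sin (θ t) * deriv θ t) t :=
    fun t => (hθd t).hasDerivAt.cos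
  intro t
  constructor
  · have d1 : deriv (fun s => (a + b * Real.cos (r s / b)) * Real.sin (θ s)) t =
        (-Real.sin (r t / b) * deriv r t) * Real.sin (θ t) +
          (a + b * Real.cos (r t / b)) * (Real.cos (θ t) * deriv θ t) :=
      ((hf t).mul (hsin t)).deriv
    have d2 : deriv (fun s => (a + b * Real.cos (r s / b)) * Real.cos (θ s)) t =
        (-Real.sin (r t / b) * deriv r t) * Real.cos (θ t) +
          (a + b * Real.cos (r t / b)) * (-Real.sin (θ t) * deriv θ t) :=
      ((hf t).mul (hcos t)).deriv
    rw [d1, d2]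
    have hpyth := Real.sin_sq_add_cos_sq (θ t)
    linear_combination (a + b * Real.cos (r t / b)) ^ 2 * deriv θ t * hpyth
  · -- conservation
    have hg : ∀ s, HasDerivAt (fun u => (a + b * Real.cos (r u / b)) ^ 2 * deriv θ u) 0 s := by
      intro s
      have h1 : HasDerivAt (fun u => (a + b * Real.cos (r u / b)) ^ 2)
          (2 * (a + b * Real.cos (r s / b)) * (-Real.sin (r s / b) * deriv r s)) s := by
        have := (hf s).pow 2
        refine this.congr_deriv ?_
        ring
      have h2 : HasDerivAt (deriv θ) (deriv (deriv θ) s) s := (hθd' s).hasDerivAt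
      have h3 := h1.mul h2
      refine h3.congr_deriv ?_
      rw [(hgeo s).2]
      have hne : a + b * Real.cos (r s / b) ≠ 0 := ne_of_gt (hRpos s)
      field_simp
      ring
    have hconst : ∀ x y : ℝ,
        (a + b * Real.cos (r x / b)) ^ 2 * deriv θ x =
        (a + b * Real.cos (r y / b)) ^ 2 * deriv θ y := by
      intro x y
      exact is_const_of_deriv_eq_zero (fun s => (hg s).differentiableAt)
        (fun s => (hg s).deriv) x y
    exact hconst t 0
end

section
/- Let a > b > 0 and let r, θ : ℝ → ℝ be twice continuously differentiable functions satisfying the torus geodesic equations, with angular momentum ℓ and speed v > 0. Then for every λ ∈ ℝ, the azimuthal radius satisfies a + b·cos(r(λ)/b) ≥ |ℓ|/v; that is, the geodesic never comes closer to the symmetry axis than the distance |ℓ|/v. -/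
/-- A torus geodesic with angular momentum ℓ and speed v > 0 never comes closer
to the symmetry axis than |ℓ|/v. -/
theorem torus_geodesic_min_radius
    (a b : ℝ) (hb : 0 < b) (hab : b < a)
    (r θ : ℝ → ℝ) (hr : ContDiff ℝ 2 r) (hθ : ContDiff ℝ 2 θ)
    (hgeo : ∀ t : ℝ,
      deriv (deriv r) t =
        -Real.sin (r t / b) * (a + b * Real.cos (r t / b)) * (deriv θ t) ^ 2 ∧
      deriv (deriv θ) t =
        (2 * Real.sin (r t / b) / (a + b * Real.cos (r t / b))) * deriv r t * deriv θ t)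
    (ℓ v : ℝ)
    (hℓ : ℓ = (a + b * Real.cos (r 0 / b)) ^ 2 * deriv θ 0)
    (hv : v = Real.sqrt ((deriv r 0) ^ 2 +
      (a + b * Real.cos (r 0 / b)) ^ 2 * (deriv θ 0) ^ 2))
    (hvpos : 0 < v) :
    ∀ t : ℝ, |ℓ| / v ≤ a + b * Real.cos (r t / b) := by
  have hRpos : ∀ t : ℝ, 0 < a + b * Real.cos (r t / b) := by
    intro t
    nlinarith [Real.neg_one_le_cos (r t / b)]
  have hrd : Differentiable ℝ r := hr.differentiable (by norm_num)
  have hθd : Differentiable ℝ θ := hθ.differentiable (by norm_num)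
  have hrd2 : Differentiable ℝ (deriv r) := by
    have := contDiff_succ_iff_deriv.mp (show ContDiff ℝ (1+1) r by exact_mod_cast hr)
    exact this.2.2.differentiable one_ne_zero
  have hθd2 : Differentiable ℝ (deriv θ) := by
    have := contDiff_succ_iff_deriv.mp (show ContDiff ℝ (1+1) θ by exact_mod_cast hθ)
    exact this.2.2.differentiable one_ne_zero
  set f : ℝ → ℝ := fun t => (a + b * Real.cos (r t / b)) ^ 2 * deriv θ t with hf
  set g : ℝ → ℝ := fun t => (deriv r t) ^ 2 + (a + b * Real.cos (r t / b)) ^ 2 * (deriv θ t) ^ 2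
    with hg
  -- derivative of R
  have hR : ∀ t : ℝ, HasDerivAt (fun x => a + b * Real.cos (r x / b))
      (-Real.sin (r t / b) * deriv r t) t := by
    intro t
    have h1 : HasDerivAt (fun x => r x / b) (deriv r t / b) t :=
      (hrd t).hasDerivAt.div_const b
    have h2 := (h1.cos.const_mul b).const_add a
    refine h2.congr_deriv ?_
    field_simp
  have hfd : ∀ t : ℝ, HasDerivAt f 0 t := by
    intro t
    obtain ⟨hg1, hg2⟩ := hgeo t
    have h1 : HasDerivAt f
        ((2 * (a + b * Real.cos (r t / b)) ^ 1 * (-Real.sin (r t / b) * deriv r t)) * deriv θ t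
          + (a + b * Real.cos (r t / b)) ^ 2 * deriv (deriv θ) t) t := by
      exact (((hR t).pow 2).mul (hθd2 t).hasDerivAt).congr_deriv (by simp only [Pi.pow_apply]; push_cast; ring)
    convert h1 using 1
    rw [hg2]
    have hRne : a + b * Real.cos (r t / b) ≠ 0 := (hRpos t).ne'
    field_simp
    ring
  have hgd : ∀ t : ℝ, HasDerivAt g 0 t := by
    intro t
    obtain ⟨hg1, hg2⟩ := hgeo t
    have h1 : HasDerivAt g
        (2 * deriv r t ^ 1 * deriv (deriv r) t
          + ((2 * (a + b * Real.cos (r t / b)) ^ 1 * (-Real.sin (r t / b) * deriv r t))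
              * (deriv θ t) ^ 2
            + (a + b * Real.cos (r t / b)) ^ 2
              * (2 * deriv θ t ^ 1 * deriv (deriv θ) t))) t := by
      exact (((hrd2 t).hasDerivAt.pow 2).add
        (((hR t).pow 2).mul ((hθd2 t).hasDerivAt.pow 2))).congr_deriv (by simp only [Pi.pow_apply]; push_cast; ring)
    convert h1 using 1
    rw [hg1, hg2]
    have hRne : a + b * Real.cos (r t / b) ≠ 0 := (hRpos t).ne'
    field_simp
    ring
  have hfc : ∀ t : ℝ, f t = f 0 := by
    intro t
    exact is_const_of_deriv_eq_zero (fun x => (hfd x).differentiableAt) (fun x => (hfd x).deriv) t 0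
  have hgc : ∀ t : ℝ, g t = g 0 := by
    intro t
    exact is_const_of_deriv_eq_zero (fun x => (hgd x).differentiableAt) (fun x => (hgd x).deriv) t 0
  intro t
  have hv2 : v ^ 2 = g t := by
    rw [hgc t, hv, hg, Real.sq_sqrt (by positivity)]
  have hℓt : ℓ = f t := by rw [hℓ, hfc t]
  set R := a + b * Real.cos (r t / b) with hRdef
  have hRt : 0 < R := hRpos t
  rw [div_le_iff₀ hvpos]
  have hsq : ℓ ^ 2 ≤ (R * v) ^ 2 := by
    have : (R * v) ^ 2 = R ^ 2 * g t := by rw [← hv2]; ring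
    rw [this, hℓt]
    simp only [hf, hg]
    nlinarith [sq_nonneg (deriv r t), sq_nonneg (R * deriv θ t), sq_nonneg (deriv θ t),
      sq_nonneg R, hRt]
  nlinarith [sq_abs ℓ, abs_nonneg ℓ, mul_pos hRt hvpos]
end

section
/- Let a > b > 0 and let r, θ : ℝ → ℝ be twice continuously differentiable functions satisfying the torus geodesic equations with angular momentum ℓ ≠ 0. Then θ'(λ) = ℓ/(a + b·cos(r(λ)/b))² for all λ, so |θ'(λ)| ≥ |ℓ|/(a+b)² > 0; consequently θ is strictly monotone on ℝ and θ(λ) tends to +∞ in one time direction and to −∞ in the other (the geodesic winds around the symmetry axis infinitely often). -/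
open Filter

private lemma winds_helper (f : ℝ → ℝ) (hf : Differentiable ℝ f) (c : ℝ) (hc : 0 < c)
    (h : ∀ t, c ≤ deriv f t) :
    StrictMono f ∧ Tendsto f atTop atTop ∧ Tendsto f atBot atBot := by
  have hmono : StrictMono f := strictMono_of_deriv_pos fun t => lt_of_lt_of_le hc (h t)
  have hg : Monotone (fun t => f t - c * t) := by
    have hd : Differentiable ℝ (fun t => f t - c * t) := hf.sub ((differentiable_id.const_mul c))
    refine monotone_of_deriv_nonneg hd fun t => ?_
    have : deriv (fun t => f t - c * t) t = deriv f t - c := by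
      have h1 : HasDerivAt (fun t => f t - c * t) (deriv f t - c) t := by
        exact ((hf t).hasDerivAt.sub (((hasDerivAt_id t).const_mul c))).congr_deriv (by ring)
      exact h1.deriv
    rw [this]; linarith [h t]
  refine ⟨hmono, ?_, ?_⟩
  · refine tendsto_atTop_mono' atTop
      (f₁ := fun t => f 0 - c * 0 + c * t) ?_ ?_
    · filter_upwards [eventually_ge_atTop (0:ℝ)] with t ht
      have := hg ht
      simp only at this ⊢
      linarith
    · exact tendsto_atTop_add_const_left _ _ (tendsto_id.const_mul_atTop hc)
  · refine tendsto_atBot_mono' atBot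
      (f₁ := fun t => f 0 - c * 0 + c * t) ?_ ?_
    · filter_upwards [eventually_le_atBot (0:ℝ)] with t ht
      have := hg ht
      simp only at this ⊢
      linarith
    · exact tendsto_atBot_add_const_left _ _ (tendsto_id.const_mul_atBot hc)

/-- A torus geodesic with nonzero angular momentum winds monotonically and
unboundedly around the symmetry axis: θ' = ℓ/R(r)², |θ'| ≥ |ℓ|/(a+b)² > 0,
θ is strictly monotone, and θ tends to ±∞ in the two time directions. -/
theorem torus_geodesic_winds_forever
    (a b : ℝ) (hb : 0 < b) (hab : b < a)
    (r θ : ℝ → ℝ) (hr : ContDiff ℝ 2 r) (hθ : ContDiff ℝ 2 θ)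
    (hgeo : ∀ t : ℝ,
      deriv (deriv r) t =
        -Real.sin (r t / b) * (a + b * Real.cos (r t / b)) * (deriv θ t) ^ 2 ∧
      deriv (deriv θ) t =
        (2 * Real.sin (r t / b) / (a + b * Real.cos (r t / b))) * deriv r t * deriv θ t)
    (ℓ : ℝ)
    (hℓ : ℓ = (a + b * Real.cos (r 0 / b)) ^ 2 * deriv θ 0)
    (hℓ0 : ℓ ≠ 0) :
    (∀ t : ℝ, deriv θ t = ℓ / (a + b * Real.cos (r t / b)) ^ 2) ∧
    (∀ t : ℝ, |ℓ| / (a + b) ^ 2 ≤ |deriv θ t|) ∧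
    0 < |ℓ| / (a + b) ^ 2 ∧
    (StrictMono θ ∨ StrictAnti θ) ∧
    ((Filter.Tendsto θ Filter.atTop Filter.atTop ∧
        Filter.Tendsto θ Filter.atBot Filter.atBot) ∨
      (Filter.Tendsto θ Filter.atTop Filter.atBot ∧
        Filter.Tendsto θ Filter.atBot Filter.atTop)) := by
  set R : ℝ → ℝ := fun t => a + b * Real.cos (r t / b) with hRdef
  have hRpos : ∀ t, 0 < R t := by
    intro t
    have h1 := Real.neg_one_le_cos (r t / b)
    simp only [hRdef]
    nlinarith
  have hRle : ∀ t, R t ≤ a + b := by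
    intro t
    have h1 := Real.cos_le_one (r t / b)
    simp only [hRdef]
    nlinarith
  have hrd : Differentiable ℝ r := hr.differentiable (by norm_num)
  have hθd : Differentiable ℝ θ := hθ.differentiable (by norm_num)
  have hθ'd : Differentiable ℝ (deriv θ) := (hθ.iterate_deriv' 1 1).differentiable (by norm_num)
  -- derivative of R
  have hR' : ∀ t, HasDerivAt R (-Real.sin (r t / b) * deriv r t) t := by
    intro t
    have h1 : HasDerivAt (fun s => r s / b) (deriv r t / b) t :=
      (hrd t).hasDerivAt.div_const b
    have h2 : HasDerivAt (fun s => Real.cos (r s / b))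
        (-Real.sin (r t / b) * (deriv r t / b)) t :=
      h1.cos
    have h3 := (h2.const_mul b).const_add a
    refine h3.congr_deriv ?_
    field_simp
  -- conservation of angular momentum
  have hcons : ∀ t, R t ^ 2 * deriv θ t = ℓ := by
    have hD : Differentiable ℝ (fun t => R t ^ 2 * deriv θ t) := by
      have : Differentiable ℝ R := fun t => (hR' t).differentiableAt
      exact (this.pow 2).mul hθ'd
    have hzero : ∀ t, deriv (fun t => R t ^ 2 * deriv θ t) t = 0 := by
      intro t
      have h1 : HasDerivAt (fun s => R s ^ 2)
          (2 * R t * (-Real.sin (r t / b) * deriv r t)) t := by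
        refine ((hR' t).pow 2).congr_deriv ?_
        norm_num
      have h2 : HasDerivAt (fun s => R s ^ 2 * deriv θ s)
          (2 * R t * (-Real.sin (r t / b) * deriv r t) * deriv θ t
            + R t ^ 2 * deriv (deriv θ) t) t :=
        h1.mul (hθ'd t).hasDerivAt
      rw [h2.deriv, (hgeo t).2]
      have hR0 : R t ≠ 0 := ne_of_gt (hRpos t)
      have hR0' : a + b * Real.cos (r t / b) ≠ 0 := hR0
      simp only [hRdef]
      field_simp
      ring
    intro t
    have := is_const_of_deriv_eq_zero hD hzero t 0
    rw [this, hℓ]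
  have key : ∀ t, deriv θ t = ℓ / R t ^ 2 := by
    intro t
    have hR0 : R t ^ 2 ≠ 0 := pow_ne_zero 2 (ne_of_gt (hRpos t))
    rw [eq_div_iff hR0, mul_comm]
    exact hcons t
  have habpos : 0 < a + b := by linarith
  have hbound : ∀ t, |ℓ| / (a + b) ^ 2 ≤ |deriv θ t| := by
    intro t
    rw [key t, abs_div, abs_pow, abs_of_pos (hRpos t)]
    gcongr
    · exact pow_pos (hRpos t) 2
    · exact (hRpos t).le
    · exact hRle t
  have hcpos : 0 < |ℓ| / (a + b) ^ 2 :=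
    div_pos (abs_pos.mpr hℓ0) (pow_pos habpos 2)
  refine ⟨key, hbound, hcpos, ?_⟩
  rcases lt_or_gt_of_ne hℓ0 with hneg | hpos
  · -- ℓ < 0 : θ strictly anti, apply helper to -θ
    have hlow : ∀ t, |ℓ| / (a + b) ^ 2 ≤ deriv (fun s => -θ s) t := by
      intro t
      have hder : deriv (fun s => -θ s) t = -deriv θ t := by
        exact (((hθd t).hasDerivAt).neg).deriv
      rw [hder]
      have h1 := hbound t
      have h2 : deriv θ t < 0 := by
        rw [key t]
        exact div_neg_of_neg_of_pos hneg (pow_pos (hRpos t) 2)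
      rw [abs_of_neg h2] at h1
      linarith
    obtain ⟨hm, ht, hb'⟩ := winds_helper (fun s => -θ s) hθd.neg _ hcpos hlow
    constructor
    · right
      intro x y hxy
      have := hm hxy
      simpa using this
    · right
      constructor
      · exact tendsto_neg_atTop_iff.mp ht
      · exact tendsto_neg_atBot_iff.mp hb'
  · -- ℓ > 0
    have hlow : ∀ t, |ℓ| / (a + b) ^ 2 ≤ deriv θ t := by
      intro t
      have h2 : 0 < deriv θ t := by
        rw [key t]
        exact div_pos hpos (pow_pos (hRpos t) 2)
      have h1 := hbound t
      rwa [abs_of_pos h2] at h1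
    obtain ⟨hm, ht, hb'⟩ := winds_helper θ hθd _ hcpos hlow
    exact ⟨Or.inl hm, Or.inl ⟨ht, hb'⟩⟩
end

section
/- Unbound geodesics: let a > b > 0 and let r, θ : ℝ → ℝ be twice continuously differentiable functions satisfying the torus geodesic equations with angular momentum ℓ and speed v satisfying ℓ² < (a − b)²·v², and suppose r'(0) > 0. Then r'(λ) ≥ √(v² − ℓ²/(a−b)²) > 0 for all λ ∈ ℝ, r is strictly increasing, and r(λ) → +∞ as λ → +∞ (the radial coordinate is monotone and unbounded, so the geodesic repeatedly crosses the inner and outer equators). -/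
/-- Unbound torus geodesics: if ℓ² < (a-b)²v² and r'(0) > 0, the radial coordinate
is strictly increasing with r' ≥ √(v² - ℓ²/(a-b)²) > 0 and r → +∞. -/
theorem torus_geodesic_unbound
    (a b : ℝ) (hb : 0 < b) (hab : b < a)
    (r θ : ℝ → ℝ) (hr : ContDiff ℝ 2 r) (hθ : ContDiff ℝ 2 θ)
    (hgeo : ∀ t : ℝ,
      deriv (deriv r) t =
        -Real.sin (r t / b) * (a + b * Real.cos (r t / b)) * (deriv θ t) ^ 2 ∧
      deriv (deriv θ) t =
        (2 * Real.sin (r t / b) / (a + b * Real.cos (r t / b))) * deriv r t * deriv θ t)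
    (ℓ v : ℝ)
    (hℓ : ℓ = (a + b * Real.cos (r 0 / b)) ^ 2 * deriv θ 0)
    (hv : v = Real.sqrt ((deriv r 0) ^ 2 +
      (a + b * Real.cos (r 0 / b)) ^ 2 * (deriv θ 0) ^ 2))
    (hunb : ℓ ^ 2 < (a - b) ^ 2 * v ^ 2)
    (hr0 : 0 < deriv r 0) :
    0 < Real.sqrt (v ^ 2 - ℓ ^ 2 / (a - b) ^ 2) ∧
    (∀ t : ℝ, Real.sqrt (v ^ 2 - ℓ ^ 2 / (a - b) ^ 2) ≤ deriv r t) ∧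
    StrictMono r ∧
    Filter.Tendsto r Filter.atTop Filter.atTop := by
  have h2 : (2 : WithTop ℕ∞) = 1 + 1 := by norm_num
  have hrdiff : Differentiable ℝ r := hr.differentiable (by norm_num)
  have hθdiff : Differentiable ℝ θ := hθ.differentiable (by norm_num)
  have hrd : Differentiable ℝ (deriv r) := by
    rw [h2] at hr; exact (contDiff_succ_iff_deriv.mp hr).2.2.differentiable one_ne_zero
  have hθd : Differentiable ℝ (deriv θ) := by
    rw [h2] at hθ; exact (contDiff_succ_iff_deriv.mp hθ).2.2.differentiable one_ne_zero
  set f : ℝ → ℝ := fun t => a + b * Real.cos (r t / b) with hf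
  have hfpos : ∀ t, 0 < f t := by
    intro t
    have := Real.neg_one_le_cos (r t / b)
    simp only [hf]
    nlinarith
  have hfderiv : ∀ t, HasDerivAt f (-Real.sin (r t / b) * deriv r t) t := by
    intro t
    have h1 : HasDerivAt (fun s => r s / b) (deriv r t / b) t :=
      ((hrdiff t).hasDerivAt).div_const b
    have h2 : HasDerivAt (fun s => Real.cos (r s / b))
        (-Real.sin (r t / b) * (deriv r t / b)) t :=
      h1.cos
    have h3 := (h2.const_mul b).const_add a
    refine h3.congr_deriv ?_
    field_simp [hb.ne']
  -- angular momentum conservation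
  set L : ℝ → ℝ := fun t => (f t) ^ 2 * deriv θ t with hL
  have hLderiv : ∀ t, HasDerivAt L 0 t := by
    intro t
    have h1 : HasDerivAt (fun s => (f s) ^ 2)
        (2 * f t ^ 1 * (-Real.sin (r t / b) * deriv r t)) t := (hfderiv t).pow 2
    have h2 : HasDerivAt (deriv θ) (deriv (deriv θ) t) t := (hθd t).hasDerivAt
    have h3 := h1.mul h2
    refine h3.congr_deriv ?_
    rw [(hgeo t).2]
    have hne : f t ≠ 0 := (hfpos t).ne'
    simp only [hf] at hne ⊢
    field_simp
    ring
  have hLconst : ∀ t, L t = ℓ := by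
    intro t
    have : L t = L 0 :=
      is_const_of_deriv_eq_zero (fun s => (hLderiv s).differentiableAt)
        (fun s => (hLderiv s).deriv) t 0
    rw [this, hℓ]
  -- energy conservation
  set E : ℝ → ℝ := fun t => (deriv r t) ^ 2 + (f t) ^ 2 * (deriv θ t) ^ 2 with hE
  have hEderiv : ∀ t, HasDerivAt E 0 t := by
    intro t
    have h1 : HasDerivAt (fun s => (deriv r s) ^ 2)
        (2 * deriv r t ^ 1 * deriv (deriv r) t) t := ((hrd t).hasDerivAt).pow 2
    have h2 : HasDerivAt (fun s => (f s) ^ 2)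
        (2 * f t ^ 1 * (-Real.sin (r t / b) * deriv r t)) t := (hfderiv t).pow 2
    have h3 : HasDerivAt (fun s => (deriv θ s) ^ 2)
        (2 * deriv θ t ^ 1 * deriv (deriv θ) t) t := ((hθd t).hasDerivAt).pow 2
    have h4 := h1.add (h2.mul h3)
    refine h4.congr_deriv ?_
    rw [(hgeo t).1, (hgeo t).2]
    have hne : f t ≠ 0 := (hfpos t).ne'
    simp only [hf] at hne ⊢
    field_simp
    ring
  have hEconst : ∀ t, E t = E 0 := fun t =>
    is_const_of_deriv_eq_zero (fun s => (hEderiv s).differentiableAt)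
      (fun s => (hEderiv s).deriv) t 0
  have hE0 : E 0 = v ^ 2 := by
    rw [hv, Real.sq_sqrt (by positivity)]
  -- key pointwise identity: r'(t)² = v² - ℓ²/f(t)²
  have hkey : ∀ t, (deriv r t) ^ 2 = v ^ 2 - ℓ ^ 2 / (f t) ^ 2 := by
    intro t
    have hLt := hLconst t
    have hEt := (hEconst t).trans hE0
    have hne : f t ≠ 0 := (hfpos t).ne'
    have : ℓ ^ 2 / (f t) ^ 2 = (f t) ^ 2 * (deriv θ t) ^ 2 := by
      rw [← hLt]; simp only [hL]; field_simp
    rw [this]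
    simp only [hE] at hEt
    linarith
  set c := Real.sqrt (v ^ 2 - ℓ ^ 2 / (a - b) ^ 2) with hc
  have hab' : (0:ℝ) < a - b := by linarith
  have habpos : (0:ℝ) < (a - b) ^ 2 := by positivity
  have hcsq_pos : 0 < v ^ 2 - ℓ ^ 2 / (a - b) ^ 2 := by
    rw [sub_pos, div_lt_iff₀ habpos]; linarith
  have hcpos : 0 < c := Real.sqrt_pos.mpr hcsq_pos
  -- lower bound on r'²
  have hsq : ∀ t, v ^ 2 - ℓ ^ 2 / (a - b) ^ 2 ≤ (deriv r t) ^ 2 := by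
    intro t
    rw [hkey t]
    have hfge : (a - b) ^ 2 ≤ (f t) ^ 2 := by
      have h1 : a - b ≤ f t := by
        have := Real.neg_one_le_cos (r t / b); simp only [hf]; nlinarith
      nlinarith [hfpos t]
    have : ℓ ^ 2 / (f t) ^ 2 ≤ ℓ ^ 2 / (a - b) ^ 2 :=
      div_le_div_of_nonneg_left (sq_nonneg ℓ) habpos hfge
    linarith
  -- r' never vanishes, hence stays positive
  have hrne : ∀ t, deriv r t ≠ 0 := by
    intro t h
    have := hsq t
    rw [h] at this
    nlinarith
  have hrpos : ∀ t, 0 < deriv r t := by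
    intro t
    by_contra h
    push_neg at h
    have ht : deriv r t < 0 := lt_of_le_of_ne h (hrne t)
    have hcont : Continuous (deriv r) := hr.continuous_deriv (by norm_num)
    have : (0:ℝ) ∈ Set.Icc (deriv r t) (deriv r 0) := ⟨le_of_lt ht, le_of_lt hr0⟩
    have hmem := intermediate_value_univ t 0 hcont this
    obtain ⟨s, hs⟩ := hmem
    exact hrne s hs
  have hbound : ∀ t, c ≤ deriv r t := by
    intro t
    have h1 : c ≤ Real.sqrt ((deriv r t) ^ 2) := Real.sqrt_le_sqrt (hsq t)
    rwa [Real.sqrt_sq (le_of_lt (hrpos t))] at h1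
  have hmono : StrictMono r := strictMono_of_deriv_pos hrpos
  refine ⟨hcpos, hbound, hmono, ?_⟩
  -- r → ∞ since r t ≥ r 0 + c t for t ≥ 0
  have hlin : ∀ t : ℝ, 0 ≤ t → r 0 + c * t ≤ r t := by
    intro t ht
    have := mul_sub_le_image_sub_of_le_deriv hrdiff hbound ht
    linarith
  have htend : Filter.Tendsto (fun t : ℝ => r 0 + c * t) Filter.atTop Filter.atTop :=
    Filter.tendsto_atTop_add_const_left _ _
      (Filter.Tendsto.const_mul_atTop hcpos Filter.tendsto_id)
  refine Filter.tendsto_atTop_mono' Filter.atTop ?_ htend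
  filter_upwards [Filter.eventually_ge_atTop (0:ℝ)] with t ht
  exact hlin t ht
end

section
/- Bound geodesics are radially confined: let a > b > 0 and let r, θ : ℝ → ℝ be twice continuously differentiable functions satisfying the torus geodesic equations with r(0) = 0, angular momentum ℓ, and speed v > 0, and suppose ℓ² > (a − b)²·v². Then a − b < |ℓ|/v ≤ a + b, and for every λ ∈ ℝ one has cos(r(λ)/b) ≥ (|ℓ|/v − a)/b > −1 and |r(λ)| ≤ b·arccos((|ℓ|/v − a)/b) < π·b; in particular the geodesic never reaches the inner equator. -/
lemma arccos_lt_pi_of_neg_one_lt {x : ℝ} (h1 : -1 < x) (h2 : x ≤ 1) :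
    Real.arccos x < Real.pi := by
  rcases lt_or_eq_of_le (Real.arccos_le_pi x) with h | h
  · exact h
  · exfalso
    have := Real.cos_arccos h1.le h2
    rw [h, Real.cos_pi] at this
    linarith

set_option maxHeartbeats 1000000 in
/-- Bound torus geodesics are radially confined: if ℓ² > (a-b)²v², then
a-b < |ℓ|/v ≤ a+b, cos(r/b) ≥ (|ℓ|/v - a)/b > -1, and
|r| ≤ b·arccos((|ℓ|/v - a)/b) < πb; the geodesic never reaches the inner equator. -/
theorem torus_geodesic_bound_confined
    (a b : ℝ) (hb : 0 < b) (hab : b < a)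
    (r θ : ℝ → ℝ) (hr : ContDiff ℝ 2 r) (hθ : ContDiff ℝ 2 θ)
    (hgeo : ∀ t : ℝ,
      deriv (deriv r) t =
        -Real.sin (r t / b) * (a + b * Real.cos (r t / b)) * (deriv θ t) ^ 2 ∧
      deriv (deriv θ) t =
        (2 * Real.sin (r t / b) / (a + b * Real.cos (r t / b))) * deriv r t * deriv θ t)
    (hr0 : r 0 = 0)
    (ℓ v : ℝ)
    (hℓ : ℓ = (a + b * Real.cos (r 0 / b)) ^ 2 * deriv θ 0)
    (hv : v = Real.sqrt ((deriv r 0) ^ 2 +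
      (a + b * Real.cos (r 0 / b)) ^ 2 * (deriv θ 0) ^ 2))
    (hvpos : 0 < v)
    (hbound : (a - b) ^ 2 * v ^ 2 < ℓ ^ 2) :
    a - b < |ℓ| / v ∧ |ℓ| / v ≤ a + b ∧
    (-1 : ℝ) < (|ℓ| / v - a) / b ∧
    (∀ t : ℝ,
      (|ℓ| / v - a) / b ≤ Real.cos (r t / b) ∧
      |r t| ≤ b * Real.arccos ((|ℓ| / v - a) / b)) ∧
    b * Real.arccos ((|ℓ| / v - a) / b) < Real.pi * b := by
  set R : ℝ → ℝ := fun t => a + b * Real.cos (r t / b) with hR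
  have hRpos : ∀ t, 0 < R t := by
    intro t
    have h1 : -1 ≤ Real.cos (r t / b) := Real.neg_one_le_cos _
    simp only [hR]
    nlinarith
  have hRub : ∀ t, R t ≤ a + b := by
    intro t
    have := Real.cos_le_one (r t / b)
    simp only [hR]
    nlinarith
  -- differentiability
  have hrd : Differentiable ℝ r := hr.differentiable (by norm_num)
  have hθd : Differentiable ℝ θ := hθ.differentiable (by norm_num)
  have hrd2 : Differentiable ℝ (deriv r) := by
    have h2 : ContDiff ℝ (1 + 1) r := by exact_mod_cast hr
    exact (contDiff_succ_iff_deriv.mp h2).2.2.differentiable (by norm_num)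
  have hθd2 : Differentiable ℝ (deriv θ) := by
    have h2 : ContDiff ℝ (1 + 1) θ := by exact_mod_cast hθ
    exact (contDiff_succ_iff_deriv.mp h2).2.2.differentiable (by norm_num)
  have hRder : ∀ t, HasDerivAt R (-Real.sin (r t / b) * deriv r t) t := by
    intro t
    have h1 : HasDerivAt (fun s => r s / b) (deriv r t / b) t := (hrd t).hasDerivAt.div_const b
    have h3 := (h1.cos.const_mul b).const_add a
    rw [hR]
    convert h3 using 1
    · rfl
    · rfl
    field_simp [hb.ne']
  -- conservation of angular momentum
  set L : ℝ → ℝ := fun t => R t ^ 2 * deriv θ t with hLdef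
  have hLder : ∀ t, HasDerivAt L 0 t := by
    intro t
    have h1 := ((hRder t).pow 2).mul (hθd2 t).hasDerivAt
    rw [hLdef]
    convert h1 using 1
    · rfl
    · rfl
    · rfl
    rw [(hgeo t).2]
    have hRne : (a + b * Real.cos (r t / b)) ≠ 0 := by
      have := hRpos t; simp only [hR] at this; linarith
    simp only [hR, Pi.pow_apply]
    field_simp
    ring
  have hLconst : ∀ t, L t = L 0 := by
    intro t
    exact is_const_of_deriv_eq_zero (fun s => (hLder s).differentiableAt)
      (fun s => (hLder s).deriv) t 0
  -- conservation of energy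
  set E : ℝ → ℝ := fun t => deriv r t ^ 2 + R t ^ 2 * deriv θ t ^ 2 with hEdef
  have hEder : ∀ t, HasDerivAt E 0 t := by
    intro t
    have h1 := ((hrd2 t).hasDerivAt.pow 2).add
      (((hRder t).pow 2).mul ((hθd2 t).hasDerivAt.pow 2))
    rw [hEdef]
    convert h1 using 1
    · rfl
    · rfl
    · rfl
    rw [(hgeo t).1, (hgeo t).2]
    have hRne : (a + b * Real.cos (r t / b)) ≠ 0 := by
      have := hRpos t; simp only [hR] at this; linarith
    simp only [hR, Pi.pow_apply]
    field_simp
    ring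
  have hEconst : ∀ t, E t = E 0 := by
    intro t
    exact is_const_of_deriv_eq_zero (fun s => (hEder s).differentiableAt)
      (fun s => (hEder s).deriv) t 0
  -- v² = E 0 and ℓ = L t
  have hEnn : 0 ≤ (deriv r 0) ^ 2 + (a + b * Real.cos (r 0 / b)) ^ 2 * (deriv θ 0) ^ 2 := by
    positivity
  have hv2 : v ^ 2 = E 0 := by
    rw [hv, Real.sq_sqrt hEnn]
  have hℓ0 : ℓ = L 0 := by
    rw [hℓ]
  have hℓt : ∀ t, ℓ = R t ^ 2 * deriv θ t := by
    intro t
    rw [hℓ0, ← hLconst t]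
  have hv2t : ∀ t, deriv r t ^ 2 + R t ^ 2 * deriv θ t ^ 2 = v ^ 2 := by
    intro t
    have h1 := hEconst t
    rw [← hv2] at h1
    exact h1
  -- key pointwise bound: |ℓ|/v ≤ R t
  have key : ∀ t, |ℓ| / v ≤ R t := by
    intro t
    have h2 : R t ^ 2 * deriv θ t ^ 2 ≤ v ^ 2 := by
      have := hv2t t
      nlinarith [sq_nonneg (deriv r t)]
    have h1 : ℓ ^ 2 = (R t ^ 2 * deriv θ t) ^ 2 := by rw [← hℓt t]
    have h3 : ℓ ^ 2 ≤ R t ^ 2 * v ^ 2 := by nlinarith [sq_nonneg (R t)]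
    have h4 : |ℓ| ≤ R t * v := by
      nlinarith [sq_abs ℓ, abs_nonneg ℓ, mul_pos (hRpos t) hvpos]
    rw [div_le_iff₀ hvpos]
    exact h4
  have key' : ∀ t, |ℓ| / v ≤ a + b * Real.cos (r t / b) := by
    intro t
    have h5 := key t
    simp only [hR] at h5
    exact h5
  clear hLder hEder hRder hLconst hEconst hℓt hv2t key hv2 hℓ0 hRpos hRub hEnn hgeo hℓ hv
  clear_value R L E
  clear hR hLdef hEdef R L E
  have h_in : |ℓ| / v ≤ a + b := by
    have h5 := key' 0
    nlinarith [Real.cos_le_one (r 0 / b)]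
  have h_out : a - b < |ℓ| / v := by
    rw [lt_div_iff₀ hvpos]
    nlinarith [sq_abs ℓ, abs_nonneg ℓ]
  have hc1 : (-1 : ℝ) < (|ℓ| / v - a) / b := by
    rw [lt_div_iff₀ hb]
    linarith
  have hc2 : (|ℓ| / v - a) / b ≤ 1 := by
    rw [div_le_one hb]
    linarith
  set c : ℝ := (|ℓ| / v - a) / b with hcdef
  have hcos : ∀ t, c ≤ Real.cos (r t / b) := by
    intro t
    rw [hcdef, div_le_iff₀ hb]
    linarith [key' t]
  set A : ℝ := Real.arccos c with hAdef
  have hAnn : 0 ≤ A := Real.arccos_nonneg c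
  have hAπ : A < Real.pi := arccos_lt_pi_of_neg_one_lt hc1 hc2
  have hcosA : Real.cos A = c := Real.cos_arccos hc1.le hc2
  have hconf : ∀ t, |r t| ≤ b * A := by
    intro t
    by_contra hcon
    push_neg at hcon
    have hfA : A < |r t / b| := by
      rw [abs_div, abs_of_pos hb, lt_div_iff₀ hb]
      nlinarith
    set y := min (|r t / b|) Real.pi with hydef
    have hyA : A < y := lt_min hfA hAπ
    have hy1 : y ≤ |r t / b| := min_le_left _ _
    have hy2 : y ≤ Real.pi := min_le_right _ _
    have hy0 : 0 ≤ y := le_trans hAnn hyA.le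
    have hcont : ContinuousOn (fun s => |r s / b|) (Set.uIcc (0 : ℝ) t) :=
      ((hrd.continuous.div_const b).abs).continuousOn
    have hy_mem : y ∈ Set.uIcc (|r 0 / b|) (|r t / b|) := by
      rw [hr0]
      simp only [zero_div, abs_zero]
      rw [Set.uIcc_of_le (abs_nonneg _)]
      exact ⟨hy0, hy1⟩
    obtain ⟨s, -, hs⟩ := intermediate_value_uIcc hcont hy_mem
    have hcy : Real.cos y < c := by
      rw [← hcosA]
      exact Real.cos_lt_cos_of_nonneg_of_le_pi hAnn hy2 hyA
    have h6 := hcos s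
    have hs' : |r s / b| = y := hs
    rw [← Real.cos_abs, hs'] at h6
    linarith
  have hfinal : b * A < Real.pi * b := by nlinarith
  exact ⟨h_out, h_in, hc1, fun t => ⟨hcos t, hconf t⟩, hfinal⟩
end

section
/- Inner equator crossing angle: let a > b > 0 and let r, θ : ℝ → ℝ be twice continuously differentiable functions satisfying the torus geodesic equations with r(0) = 0 and speed v > 0, and define sin β(λ) = (a + b·cos(r(λ)/b))·θ'(λ)/v. If the geodesic crosses the inner equator at time λ₁, i.e. cos(r(λ₁)/b) = −1, then sin β(λ₁) = ((a+b)/(a−b))·sin β(0). -/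
/-- Inner equator crossing angle: a geodesic from the outer equator crossing the
inner equator does so with sin β(t₁) = ((a+b)/(a-b))·sin β(0), where
sin β(t) = R(r(t))·θ'(t)/v. -/
theorem torus_geodesic_inner_crossing_angle
    (a b : ℝ) (hb : 0 < b) (hab : b < a)
    (r θ : ℝ → ℝ) (hr : ContDiff ℝ 2 r) (hθ : ContDiff ℝ 2 θ)
    (hgeo : ∀ t : ℝ,
      deriv (deriv r) t =
        -Real.sin (r t / b) * (a + b * Real.cos (r t / b)) * (deriv θ t) ^ 2 ∧
      deriv (deriv θ) t =
        (2 * Real.sin (r t / b) / (a + b * Real.cos (r t / b))) * deriv r t * deriv θ t)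
    (hr0 : r 0 = 0)
    (v : ℝ)
    (hv : v = Real.sqrt ((deriv r 0) ^ 2 +
      (a + b * Real.cos (r 0 / b)) ^ 2 * (deriv θ 0) ^ 2))
    (hvpos : 0 < v)
    (t₁ : ℝ) (hcross : Real.cos (r t₁ / b) = -1) :
    (a + b * Real.cos (r t₁ / b)) * deriv θ t₁ / v =
      ((a + b) / (a - b)) * ((a + b) * deriv θ 0 / v) := by
  have hR : ∀ t, (0:ℝ) < a + b * Real.cos (r t / b) := by
    intro t
    nlinarith [Real.neg_one_le_cos (r t / b)]
  have hdr : Differentiable ℝ r := hr.differentiable (by norm_num)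
  have hθ' : ContDiff ℝ 1 (deriv θ) := by
    have : ContDiff ℝ (1+1) θ := by norm_num; exact hθ
    exact (contDiff_succ_iff_deriv.mp this).2.2
  have hdθ' : Differentiable ℝ (deriv θ) := hθ'.differentiable (by norm_num)
  set F : ℝ → ℝ := fun t => (a + b * Real.cos (r t / b)) ^ 2 * deriv θ t with hFdef
  have hFder : ∀ t, HasDerivAt F 0 t := by
    intro t
    have h1 : HasDerivAt r (deriv r t) t := (hdr t).hasDerivAt
    have h2 : HasDerivAt (fun s => r s / b) (deriv r t / b) t := h1.div_const b
    have h3 : HasDerivAt (fun s => Real.cos (r s / b))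
        (-Real.sin (r t / b) * (deriv r t / b)) t :=
      h2.cos
    have h4 : HasDerivAt (fun s => a + b * Real.cos (r s / b))
        (b * (-Real.sin (r t / b) * (deriv r t / b))) t :=
      (h3.const_mul b).const_add a
    have h5 : HasDerivAt (fun s => (a + b * Real.cos (r s / b)) ^ 2)
        (2 * (a + b * Real.cos (r t / b)) ^ 1 *
          (b * (-Real.sin (r t / b) * (deriv r t / b)))) t := h4.pow 2
    have h6 : HasDerivAt (deriv θ) (deriv (deriv θ) t) t := (hdθ' t).hasDerivAt
    have h7 := h5.mul h6
    have hval : 2 * (a + b * Real.cos (r t / b)) ^ 1 *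
          (b * (-Real.sin (r t / b) * (deriv r t / b))) * deriv θ t +
        (a + b * Real.cos (r t / b)) ^ 2 * deriv (deriv θ) t = 0 := by
      rw [(hgeo t).2]
      have hRne : (a + b * Real.cos (r t / b)) ≠ 0 := (hR t).ne'
      field_simp
      ring
    rw [hval] at h7
    exact h7
  have hFconst : F t₁ = F 0 := by
    apply is_const_of_deriv_eq_zero
    · intro x; exact (hFder x).differentiableAt
    · intro x; exact (hFder x).deriv
  have hc0 : Real.cos (r 0 / b) = 1 := by rw [hr0]; simp
  have hFeq : (a - b) ^ 2 * deriv θ t₁ = (a + b) ^ 2 * deriv θ 0 := by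
    have := hFconst
    rw [hFdef] at this
    simp only [hcross, hc0] at this
    rw [show a + b * (-1) = a - b by ring, show a + b * 1 = a + b by ring] at this
    exact this
  have hvne : v ≠ 0 := hvpos.ne'
  have habne : a - b ≠ 0 := by linarith
  rw [hcross, show a + b * (-1) = a - b by ring]
  field_simp
  linear_combination hFeq
end

section
/- Every geodesic on a ring torus other than the inner equator passes through the outer equator: let a > b > 0 and let r, θ : ℝ → ℝ be twice continuously differentiable functions satisfying the torus geodesic equations with speed v > 0. If the geodesic is not the inner equator, i.e. there exists λ₀ with cos(r(λ₀)/b) ≠ −1, then there exists λ ∈ ℝ with cos(r(λ)/b) = 1 (the geodesic crosses the outer equator). -/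
open Real Set

private lemma aux_one_sub_cos (x : ℝ) : 1 - Real.cos x ≤ x ^ 2 / 2 := by
  have h1 : (0:ℝ) ≤ (1 - Real.cos x) / 2 := by nlinarith [Real.cos_le_one x]
  have h2 := Real.abs_sin_half x
  have h3 : |Real.sin (x/2)| ≤ |x/2| := Real.abs_sin_le_abs
  rw [h2] at h3
  have h5 : (1 - Real.cos x)/2 ≤ (x/2)^2 := by
    have h6 := Real.sq_sqrt h1
    nlinarith [Real.sqrt_nonneg ((1 - Real.cos x)/2), abs_nonneg (x/2), sq_abs (x/2)]
  nlinarith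

private lemma aux_escape (f : ℝ → ℝ) (hf : Differentiable ℝ f)
    (hmono : StrictMono (deriv f)) (hd : 0 < deriv f 1) (hi : ℝ)
    (hbd : ∀ t, f t < hi) : False := by
  set d := deriv f 1 with hdd
  set T : ℝ := 1 + (hi - f 1) / d with hT
  have hfb : f 1 < hi := hbd 1
  have hT1 : 1 < T := by
    rw [hT]; nlinarith [div_pos (by linarith : (0:ℝ) < hi - f 1) hd]
  obtain ⟨c, hc, hceq⟩ := exists_hasDerivAt_eq_slope f (deriv f) hT1
    (hf.continuous.continuousOn) (fun x _ => (hf x).hasDerivAt)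
  have hdc : d < deriv f c := hmono hc.1
  have hfT : f T - f 1 = deriv f c * (T - 1) := by
    rw [hceq, div_mul_cancel₀]; · linarith
  have : d * (T - 1) < deriv f c * (T - 1) := by
    apply mul_lt_mul_of_pos_right hdc; linarith
  have hdT : d * (T - 1) = hi - f 1 := by
    rw [hT]; field_simp; ring
  have := hbd T
  linarith

private lemma aux_unbounded (f : ℝ → ℝ) (hf : Differentiable ℝ f)
    (hmono : StrictMono (deriv f)) (hi : ℝ)
    (hbd : ∀ t, f t < hi) : False := by
  rcases lt_or_ge 0 (deriv f 1) with hd | hd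
  · exact aux_escape f hf hmono hd hi hbd
  · set g : ℝ → ℝ := fun x => f (-x) with hg
    have hgd : Differentiable ℝ g := hf.comp (differentiable_neg)
    have hgderiv : ∀ x, deriv g x = -deriv f (-x) := fun x => deriv_comp_neg f x
    have hgmono : StrictMono (deriv g) := by
      intro x y hxy
      rw [hgderiv, hgderiv]
      have : -y < -x := by linarith
      have := hmono this
      linarith
    have hgd1 : 0 < deriv g 1 := by
      rw [hgderiv]
      have : deriv f (-1) < deriv f 1 := hmono (by norm_num)
      linarith
    exact aux_escape g hgd hgmono hgd1 hi (fun t => hbd (-t))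

private lemma aux_mvt_lb (f : ℝ → ℝ) (hf : Differentiable ℝ f)
    (δ lo hi : ℝ) (hδ : 0 < δ) (hd : ∀ t, δ ≤ |deriv f t|)
    (hbd : ∀ t, lo < f t ∧ f t < hi) : False := by
  have hlh : lo < hi := lt_trans (hbd 0).1 (hbd 0).2
  set T : ℝ := (hi - lo) / δ + 1 with hT
  have hTpos : 0 < T := by
    rw [hT]
    have : 0 ≤ (hi - lo) / δ := div_nonneg (by linarith) hδ.le
    linarith
  obtain ⟨c, _, hceq⟩ := exists_hasDerivAt_eq_slope f (deriv f) hTpos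
    (hf.continuous.continuousOn) (fun x _ => (hf x).hasDerivAt)
  have h1 : |f T - f 0| < hi - lo := by
    rw [abs_sub_lt_iff]
    constructor <;> [linarith [(hbd T).2, (hbd 0).1]; linarith [(hbd T).1, (hbd 0).2]]
  have h2 : |f T - f 0| = |deriv f c| * T := by
    rw [hceq, sub_zero, abs_div, abs_of_pos hTpos]
    field_simp
  have h3 : δ * T ≤ |deriv f c| * T := mul_le_mul_of_nonneg_right (hd c) hTpos.le
  have h4 : δ * T = hi - lo + δ := by rw [hT]; field_simp
  linarith

private lemma aux_gronwall_zero (f : ℝ → ℝ) (hf : Differentiable ℝ f) (K : ℝ)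
    (hK : ∀ s, |deriv f s| ≤ K * |f s|) (t1 t2 : ℝ) (h12 : t1 ≤ t2) (h1 : f t1 = 0) :
    f t2 = 0 := by
  have := norm_le_gronwallBound_of_norm_deriv_right_le (f := f) (f' := deriv f)
    (δ := 0) (K := K) (ε := 0) (a := t1) (b := t2)
    (hf.continuous.continuousOn)
    (fun x _ => (hf x).hasDerivAt.hasDerivWithinAt)
    (by rw [Real.norm_eq_abs, h1, abs_zero])
    (fun x _ => by rw [Real.norm_eq_abs, Real.norm_eq_abs, add_zero]; exact hK x)
    t2 (Set.mem_Icc.mpr ⟨h12, le_refl t2⟩)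
  rw [gronwallBound_ε0_δ0, Real.norm_eq_abs] at this
  exact abs_eq_zero.mp (le_antisymm this (abs_nonneg _))

private lemma aux_gronwall_zero' (f : ℝ → ℝ) (hf : Differentiable ℝ f) (K : ℝ)
    (hK : ∀ s, |deriv f s| ≤ K * |f s|) (t1 t2 : ℝ) (h12 : t2 ≤ t1) (h1 : f t1 = 0) :
    f t2 = 0 := by
  set g : ℝ → ℝ := fun s => f (t1 + t2 - s) with hg
  have hgd : Differentiable ℝ g := hf.comp (by fun_prop)
  have hgderiv : ∀ s, deriv g s = -deriv f (t1 + t2 - s) := fun s =>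
    deriv_comp_const_sub f (t1 + t2) s
  have hgK : ∀ s, |deriv g s| ≤ K * |g s| := by
    intro s
    rw [hgderiv, abs_neg]
    exact hK _
  have := aux_gronwall_zero g hgd K hgK t2 t1 h12 (by simp [hg, h1])
  simpa [hg] using this

set_option maxHeartbeats 1000000 in
/-- Every geodesic on a ring torus other than the inner equator passes through the
outer equator: if cos(r(t₀)/b) ≠ -1 for some t₀, then cos(r(t)/b) = 1 for some t. -/
theorem torus_geodesic_meets_outer_equator
    (a b : ℝ) (hb : 0 < b) (hab : b < a)
    (r θ : ℝ → ℝ) (hr : ContDiff ℝ 2 r) (hθ : ContDiff ℝ 2 θ)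
    (hgeo : ∀ t : ℝ,
      deriv (deriv r) t =
        -Real.sin (r t / b) * (a + b * Real.cos (r t / b)) * (deriv θ t) ^ 2 ∧
      deriv (deriv θ) t =
        (2 * Real.sin (r t / b) / (a + b * Real.cos (r t / b))) * deriv r t * deriv θ t)
    (v : ℝ)
    (hv : v = Real.sqrt ((deriv r 0) ^ 2 +
      (a + b * Real.cos (r 0 / b)) ^ 2 * (deriv θ 0) ^ 2))
    (hvpos : 0 < v)
    (hnotinner : ∃ t₀ : ℝ, Real.cos (r t₀ / b) ≠ -1) :
    ∃ t : ℝ, Real.cos (r t / b) = 1 := by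
  set R : ℝ → ℝ := fun t => a + b * Real.cos (r t / b) with hRdef
  have hb' : b ≠ 0 := ne_of_gt hb
  have hRlb : ∀ t, a - b ≤ R t := by
    intro t; have := Real.neg_one_le_cos (r t / b)
    rw [hRdef]; nlinarith
  have hRub : ∀ t, R t ≤ a + b := by
    intro t; have := Real.cos_le_one (r t / b)
    rw [hRdef]; nlinarith
  have hRpos : ∀ t, 0 < R t := fun t => lt_of_lt_of_le (by linarith) (hRlb t)
  -- differentiability
  have hrd : Differentiable ℝ r := hr.differentiable (by norm_num)
  have hθd : Differentiable ℝ θ := hθ.differentiable (by norm_num)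
  have hrd2 : Differentiable ℝ (deriv r) := by
    have h := hr
    rw [show (2 : WithTop ℕ∞) = 1 + 1 by norm_num, contDiff_succ_iff_deriv] at h
    exact h.2.2.differentiable (by norm_num)
  have hθd2 : Differentiable ℝ (deriv θ) := by
    have h := hθ
    rw [show (2 : WithTop ℕ∞) = 1 + 1 by norm_num, contDiff_succ_iff_deriv] at h
    exact h.2.2.differentiable (by norm_num)
  -- derivative of R along the path
  have hRt : ∀ t, HasDerivAt R (-Real.sin (r t / b) * deriv r t) t := by
    intro t
    have h1 : HasDerivAt (fun s => r s / b) (deriv r t / b) t := (hrd t).hasDerivAt.div_const b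
    have h2 : HasDerivAt (fun s => Real.cos (r s / b)) (-Real.sin (r t / b) * (deriv r t / b)) t :=
      h1.cos
    have h3 := (h2.const_mul b).const_add a
    refine h3.congr_deriv ?_
    field_simp
  -- conservation of the Clairaut constant
  set h : ℝ := R 0 ^ 2 * deriv θ 0 with hhdef
  have hCd : ∀ t, HasDerivAt (fun s => R s ^ 2 * deriv θ s) 0 t := by
    intro t
    obtain ⟨g1, g2⟩ := hgeo t
    have hθ' : HasDerivAt (deriv θ) (deriv (deriv θ) t) t := (hθd2 t).hasDerivAt
    have h1 := ((hRt t).pow 2).mul hθ'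
    refine h1.congr_deriv ?_
    rw [g2]
    have := (hRpos t).ne'
    rw [hRdef] at this ⊢
    simp only [Pi.pow_apply] at this ⊢
    field_simp
    ring
  have hC : ∀ t, R t ^ 2 * deriv θ t = h := by
    intro t
    exact is_const_of_deriv_eq_zero (fun s => (hCd s).differentiableAt)
      (fun s => (hCd s).deriv) t 0
  -- conservation of energy
  have hEd : ∀ t, HasDerivAt (fun s => deriv r s ^ 2 + R s ^ 2 * deriv θ s ^ 2) 0 t := by
    intro t
    obtain ⟨g1, g2⟩ := hgeo t
    have hr' : HasDerivAt (deriv r) (deriv (deriv r) t) t := (hrd2 t).hasDerivAt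
    have hθ' : HasDerivAt (deriv θ) (deriv (deriv θ) t) t := (hθd2 t).hasDerivAt
    have h1 := (hr'.pow 2).add (((hRt t).pow 2).mul (hθ'.pow 2))
    refine h1.congr_deriv ?_
    rw [g1, g2]
    have := (hRpos t).ne'
    rw [hRdef] at this ⊢
    simp only [Pi.pow_apply] at this ⊢
    field_simp
    ring
  have hE : ∀ t, deriv r t ^ 2 + R t ^ 2 * deriv θ t ^ 2 = v ^ 2 := by
    have h0 : deriv r 0 ^ 2 + R 0 ^ 2 * deriv θ 0 ^ 2 = v ^ 2 := by
      rw [hv, sq_sqrt (by positivity)]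
    intro t
    rw [← h0]
    exact is_const_of_deriv_eq_zero (fun s => (hEd s).differentiableAt)
      (fun s => (hEd s).deriv) t 0
  -- key pointwise identity
  have hKey : ∀ t, deriv r t ^ 2 * R t ^ 2 = v ^ 2 * R t ^ 2 - h ^ 2 := by
    intro t
    linear_combination R t ^ 2 * hE t - (R t ^ 2 * deriv θ t + h) * hC t
  clear_value R h
  -- suppose the geodesic never meets the outer equator
  by_contra hno
  push_neg at hno
  have hπ := Real.pi_pos
  -- confinement to one fundamental strip
  obtain ⟨n, hconf⟩ : ∃ n : ℤ, ∀ t,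
      (n : ℝ) * (2 * π) < r t / b ∧ r t / b < (n : ℝ) * (2 * π) + 2 * π := by
    set n : ℤ := ⌊r 0 / (b * (2 * π))⌋ with hn
    have hb2π : (0:ℝ) < 2 * π := by linarith
    have key0 : r 0 / (b * (2 * π)) * (2 * π) = r 0 / b := by field_simp
    have hn1 : (n : ℝ) * (2 * π) ≤ r 0 / b := by
      have := mul_le_mul_of_nonneg_right (Int.floor_le (r 0 / (b * (2 * π)))) hb2π.le
      rwa [key0] at this
    have hn2 : r 0 / b < ((n : ℝ) + 1) * (2 * π) := by
      have := mul_lt_mul_of_pos_right (Int.lt_floor_add_one (r 0 / (b * (2 * π)))) hb2π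
      rwa [key0] at this
    have hn1' : (n : ℝ) * (2 * π) < r 0 / b := by
      rcases lt_or_eq_of_le hn1 with hlt | heq
      · exact hlt
      · exact absurd (heq ▸ Real.cos_int_mul_two_pi n) (hno 0)
    have hcont : Continuous (fun t => r t / b) := hrd.continuous.div_const b
    refine ⟨n, fun t => ⟨?_, ?_⟩⟩
    · by_contra hle
      push_neg at hle
      have hmem : (n : ℝ) * (2 * π) ∈ Set.uIcc (r t / b) (r 0 / b) :=
        Set.mem_uIcc.mpr (Or.inl ⟨hle, hn1⟩)
      obtain ⟨s, _, hs⟩ := intermediate_value_uIcc hcont.continuousOn hmem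
      simp only at hs
      exact hno s (by rw [hs]; exact Real.cos_int_mul_two_pi n)
    · by_contra hle
      push_neg at hle
      have hle' : ((n : ℝ) + 1) * (2 * π) ≤ r t / b := by linarith
      have hmem : ((n : ℝ) + 1) * (2 * π) ∈ Set.uIcc (r t / b) (r 0 / b) :=
        Set.mem_uIcc.mpr (Or.inr ⟨hn2.le, hle'⟩)
      obtain ⟨s, _, hs⟩ := intermediate_value_uIcc hcont.continuousOn hmem
      simp only at hs
      have heq : r s / b = ((n + 1 : ℤ) : ℝ) * (2 * π) := by push_cast; linarith [hs]
      exact hno s (by rw [heq]; exact Real.cos_int_mul_two_pi (n + 1))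
  -- recentered coordinate p
  set p : ℝ → ℝ := fun t => r t - b * ((n : ℝ) * (2 * π) + π) with hpdef
  have hpd : Differentiable ℝ p := hrd.sub_const _
  have hpderiv : ∀ t, deriv p t = deriv r t := by
    intro t
    rw [hpdef]
    exact deriv_sub_const _
  clear_value p
  have hpb : ∀ t, r t / b = p t / b + π + (n : ℝ) * (2 * π) := by
    intro t
    rw [hpdef]
    field_simp
    ring
  have hcosid : ∀ t, Real.cos (r t / b) = -Real.cos (p t / b) := by
    intro t
    rw [hpb t, Real.cos_add_int_mul_two_pi, Real.cos_add_pi]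
  have hsinid : ∀ t, Real.sin (r t / b) = -Real.sin (p t / b) := by
    intro t
    rw [hpb t, Real.sin_add_int_mul_two_pi, Real.sin_add_pi]
  have hpbound : ∀ t, -π < p t / b ∧ p t / b < π := by
    intro t
    have h1 := (hconf t).1
    have h2 := (hconf t).2
    rw [hpb t] at h1 h2
    constructor <;> linarith
  have hRp : ∀ t, R t = a - b * Real.cos (p t / b) := by
    intro t
    rw [hRdef]
    simp only
    rw [hcosid t]
    ring
  -- the given point with cos(r/b) ≠ -1 gives p t₀ ≠ 0
  obtain ⟨t₀, ht₀⟩ := hnotinner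
  have hp0 : p t₀ ≠ 0 := by
    intro h0
    apply ht₀
    rw [hcosid t₀, h0]
    norm_num
  -- bounds on r itself
  have hrbound : ∀ t, (n : ℝ) * (2 * π) * b < r t ∧ r t < ((n : ℝ) * (2 * π) + 2 * π) * b := by
    intro t
    have h1 := (hconf t).1
    have h2 := (hconf t).2
    constructor
    · exact (lt_div_iff₀ hb).mp h1
    · exact (div_lt_iff₀ hb).mp h2
  by_cases hcase : h ^ 2 < v ^ 2 * (a - b) ^ 2
  · -- |r'| is bounded below: r is unbounded, contradiction
    set δ2 : ℝ := v ^ 2 - h ^ 2 / (a - b) ^ 2 with hδ2def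
    have hab2 : (0:ℝ) < (a - b) ^ 2 := pow_pos (by linarith) 2
    have hδ2 : 0 < δ2 := by
      rw [hδ2def, sub_pos, div_lt_iff₀ hab2]
      linarith
    clear_value δ2
    have hlb : ∀ t, δ2 ≤ deriv r t ^ 2 := by
      intro t
      have hk := hKey t
      have h1 : a - b ≤ R t := hRlb t
      have h2 : (a - b) ^ 2 ≤ R t ^ 2 := by nlinarith
      have h3 : h ^ 2 / (a - b) ^ 2 * (a - b) ^ 2 = h ^ 2 := div_mul_cancel₀ _ (ne_of_gt hab2)
      have h4 : 0 ≤ h ^ 2 / (a - b) ^ 2 := div_nonneg (sq_nonneg h) hab2.le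
      have hQ : 0 ≤ h ^ 2 / (a - b) ^ 2 * (R t ^ 2 - (a - b) ^ 2) := mul_nonneg h4 (by linarith)
      have h5 : δ2 * R t ^ 2 ≤ deriv r t ^ 2 * R t ^ 2 := by
        rw [hδ2def]
        nlinarith [hk, h3, hQ]
      exact le_of_mul_le_mul_right h5 (pow_pos (hRpos t) 2)
    have hδ : 0 < Real.sqrt δ2 := Real.sqrt_pos.mpr hδ2
    have habs : ∀ t, Real.sqrt δ2 ≤ |deriv r t| := by
      intro t
      rw [← Real.sqrt_sq_eq_abs]
      exact Real.sqrt_le_sqrt (hlb t)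
    exact aux_mvt_lb r hrd (Real.sqrt δ2) ((n : ℝ) * (2 * π) * b)
      (((n : ℝ) * (2 * π) + 2 * π) * b) hδ habs hrbound
  · -- h² ≥ v²(a-b)² : p never vanishes, constant sign, convexity contradiction
    push_neg at hcase
    have hh2pos : 0 < h ^ 2 := lt_of_lt_of_le (mul_pos (pow_pos hvpos 2) (pow_pos (by linarith : (0:ℝ) < a - b) 2)) hcase
    have hhne : h ≠ 0 := by
      intro h0
      rw [h0] at hh2pos
      norm_num at hh2pos
    have hθ'ne : ∀ t, deriv θ t ≠ 0 := by
      intro t h0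
      apply hhne
      rw [← hC t, h0, mul_zero]
    have hpne : ∀ t, p t ≠ 0 := by
      rcases lt_or_eq_of_le hcase with hgt | heq
      · -- strict: p t = 0 would force R t = a - b, contradicting energy
        intro t h0
        have hRt' : R t = a - b := by
          rw [hRp t, h0, zero_div, Real.cos_zero]
          ring
        have hk := hKey t
        rw [hRt'] at hk
        have hnn : 0 ≤ deriv r t ^ 2 * (a - b) ^ 2 := mul_nonneg (sq_nonneg _) (sq_nonneg _)
        linarith [hk, hgt, hnn]
      · -- borderline: Grönwall forces p ≡ 0, contradicting p t₀ ≠ 0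
        intro t1 h0
        set K2 : ℝ := v ^ 2 * a / (b * (a - b) ^ 2) with hK2def
        have hK2pos : 0 < K2 := by
          rw [hK2def]
          exact div_pos (mul_pos (pow_pos hvpos 2) (by linarith)) (mul_pos hb (pow_pos (by linarith) 2))
        clear_value K2
        have hbd : ∀ s, |deriv p s| ≤ Real.sqrt K2 * |p s| := by
          intro s
          have hk := hKey s
          have hcosb := aux_one_sub_cos (p s / b)
          have hRs1 : a - b ≤ R s := hRlb s
          have hRs2 : R s ≤ a + b := hRub s
          have hRps : R s = a - b * Real.cos (p s / b) := hRp s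
          -- R s - (a - b) ≤ p s ^ 2 / (2 * b)
          have hstep : R s - (a - b) ≤ p s ^ 2 / (2 * b) := by
            rw [hRps]
            have : (p s / b) ^ 2 / 2 = p s ^ 2 / (2 * b ^ 2) := by
              rw [div_pow]
              ring
            rw [this] at hcosb
            have hble : b * (1 - Real.cos (p s / b)) ≤ b * (p s ^ 2 / (2 * b ^ 2)) :=
              mul_le_mul_of_nonneg_left hcosb hb.le
            have heq2 : b * (p s ^ 2 / (2 * b ^ 2)) = p s ^ 2 / (2 * b) := by
              field_simp
            rw [heq2] at hble
            linarith
          -- squared bound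
          have hsq : deriv r s ^ 2 ≤ K2 * p s ^ 2 := by
            have e1 : deriv r s ^ 2 * R s ^ 2 = v ^ 2 * (R s - (a - b)) * (R s + (a - b)) := by
              rw [hKey s, ← heq]
              ring
            have e2' : (R s - (a - b)) * (R s + (a - b)) ≤ (p s ^ 2 / (2 * b)) * (2 * a) := by
              apply mul_le_mul hstep (by linarith) (by linarith)
              positivity
            have e2 : v ^ 2 * (R s - (a - b)) * (R s + (a - b)) ≤
                v ^ 2 * (p s ^ 2 / (2 * b)) * (2 * a) := by
              calc v ^ 2 * (R s - (a - b)) * (R s + (a - b))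
                  = v ^ 2 * ((R s - (a - b)) * (R s + (a - b))) := by ring
                _ ≤ v ^ 2 * ((p s ^ 2 / (2 * b)) * (2 * a)) :=
                    mul_le_mul_of_nonneg_left e2' (sq_nonneg v)
                _ = v ^ 2 * (p s ^ 2 / (2 * b)) * (2 * a) := by ring
            have e3 : deriv r s ^ 2 * (a - b) ^ 2 ≤ deriv r s ^ 2 * R s ^ 2 := by
              have h2' : (a - b) ^ 2 ≤ R s ^ 2 := pow_le_pow_left₀ (by linarith) hRs1 2
              exact mul_le_mul_of_nonneg_left h2' (sq_nonneg (deriv r s))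
            have e4 : v ^ 2 * (p s ^ 2 / (2 * b)) * (2 * a) = K2 * p s ^ 2 * (a - b) ^ 2 := by
              rw [hK2def]
              have habne : (a - b) ≠ 0 := ne_of_gt (by linarith)
              field_simp
            have hab2 : (0:ℝ) < (a - b) ^ 2 := pow_pos (by linarith) 2
            have : deriv r s ^ 2 * (a - b) ^ 2 ≤ K2 * p s ^ 2 * (a - b) ^ 2 := by
              calc deriv r s ^ 2 * (a - b) ^ 2 ≤ deriv r s ^ 2 * R s ^ 2 := e3
                _ = v ^ 2 * (R s - (a - b)) * (R s + (a - b)) := e1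
                _ ≤ v ^ 2 * (p s ^ 2 / (2 * b)) * (2 * a) := e2
                _ = K2 * p s ^ 2 * (a - b) ^ 2 := e4
            exact le_of_mul_le_mul_right this hab2
          rw [hpderiv s, ← Real.sqrt_sq_eq_abs, ← Real.sqrt_sq_eq_abs]
          rw [← Real.sqrt_mul hK2pos.le]
          exact Real.sqrt_le_sqrt hsq
        rcases le_total t1 t₀ with hle | hle
        · exact hp0 (aux_gronwall_zero p hpd (Real.sqrt K2) hbd t1 t₀ hle h0)
        · exact hp0 (aux_gronwall_zero' p hpd (Real.sqrt K2) hbd t1 t₀ hle h0)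
    -- p has constant sign
    have hpcont : Continuous p := hpd.continuous
    have hsign : (∀ t, 0 < p t) ∨ (∀ t, p t < 0) := by
      rcases (hpne t₀).lt_or_gt with hneg | hpos
      · right
        intro t
        rcases (hpne t).lt_or_gt with h1 | h1
        · exact h1
        · exfalso
          have hmem : (0:ℝ) ∈ Set.uIcc (p t₀) (p t) := Set.mem_uIcc.mpr (Or.inl ⟨hneg.le, h1.le⟩)
          obtain ⟨s, _, hs⟩ := intermediate_value_uIcc hpcont.continuousOn hmem
          exact hpne s hs
      · left
        intro t
        rcases (hpne t).lt_or_gt with h1 | h1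
        · exfalso
          have hmem : (0:ℝ) ∈ Set.uIcc (p t) (p t₀) := Set.mem_uIcc.mpr (Or.inl ⟨h1.le, hpos.le⟩)
          obtain ⟨s, _, hs⟩ := intermediate_value_uIcc hpcont.continuousOn hmem
          exact hpne s hs
        · exact h1
    -- second derivative formula
    have hr'' : ∀ t, deriv (deriv r) t = Real.sin (p t / b) * (R t * deriv θ t ^ 2) := by
      intro t
      rw [(hgeo t).1, hsinid t, hRdef]
      simp only
      ring
    have hθsq : ∀ t, 0 < deriv θ t ^ 2 := by
      intro t
      exact lt_of_le_of_ne (sq_nonneg _) (Ne.symm (pow_ne_zero 2 (hθ'ne t)))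
    rcases hsign with hpos | hneg
    · -- p > 0 everywhere : r is strictly convex, contradiction with upper bound
      have hconv : ∀ t, 0 < deriv (deriv r) t := by
        intro t
        rw [hr'' t]
        have hsin : 0 < Real.sin (p t / b) :=
          Real.sin_pos_of_pos_of_lt_pi (div_pos (hpos t) hb) (hpbound t).2
        exact mul_pos hsin (mul_pos (hRpos t) (hθsq t))
      have hmono : StrictMono (deriv r) := strictMono_of_deriv_pos hconv
      exact aux_unbounded r hrd hmono (((n : ℝ) * (2 * π) + 2 * π) * b)
        (fun t => (hrbound t).2)
    · -- p < 0 everywhere : -r is strictly convex, contradiction with upper bound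
      set f : ℝ → ℝ := fun t => -r t with hfdef
      have hfd : Differentiable ℝ f := hrd.neg
      have hfderiv : deriv f = fun t => -deriv r t := by
        funext t
        exact deriv.neg
      have hconv : ∀ t, 0 < deriv (deriv f) t := by
        intro t
        rw [hfderiv]
        have : deriv (fun s => -deriv r s) t = -deriv (deriv r) t := deriv.neg
        rw [this, hr'' t]
        have hsin : Real.sin (p t / b) < 0 := by
          have h1 : -(p t / b) < π := by
            have := (hpbound t).1
            linarith
          have h2 : 0 < -(p t / b) := by
            have := div_neg_of_neg_of_pos (hneg t) hb
            linarith
          have := Real.sin_pos_of_pos_of_lt_pi h2 h1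
          rw [Real.sin_neg] at this
          linarith
        nlinarith [mul_pos (hRpos t) (hθsq t)]
      have hmono : StrictMono (deriv f) := strictMono_of_deriv_pos hconv
      apply aux_unbounded f hfd hmono (-((n : ℝ) * (2 * π) * b))
      intro t
      rw [hfdef]
      simp only
      have := (hrbound t).1
      linarith
end

section
/- Asymptotic approach to the inner equator: let a > b > 0 and let r, θ : ℝ → ℝ be twice continuously differentiable functions satisfying the torus geodesic equations with r(0) = 0, r'(0) > 0, speed v > 0, and angular momentum ℓ satisfying ℓ² = (a − b)²·v² (the critical energy level E = v²/2 = ℓ²/(2(a−b)²)). Then r is strictly increasing on [0, ∞), 0 < r(λ) < π·b for all λ > 0, and r(λ) → π·b as λ → +∞: the geodesic asymptotically approaches the inner equator without ever reaching it. -/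
open Real Filter Set

/-- key trig identity -/
lemma trig_ident (a b x : ℝ) :
    (a + b * Real.cos x) ^ 2 - (a - b) ^ 2
      = 4 * b * Real.cos (x/2) ^ 2 * (a - b * Real.sin (x/2) ^ 2) := by
  have h1 : Real.cos x = 2 * Real.cos (x/2)^2 - 1 := by
    have : Real.cos (2 * (x/2)) = 2 * Real.cos (x/2)^2 - 1 := by
      rw [Real.cos_two_mul]
    rw [← this]; ring_nf
  have h2 := Real.sin_sq_add_cos_sq (x/2)
  rw [h1]; linear_combination (4*b^2*Real.cos (x/2)^2) * h2

/-- 1 + cos x = 2 cos(x/2)^2 -/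
lemma one_add_cos (x : ℝ) : 1 + Real.cos x = 2 * Real.cos (x/2)^2 := by
  have : Real.cos (2 * (x/2)) = 2 * Real.cos (x/2)^2 - 1 := by
    rw [Real.cos_two_mul]
  have h2 : Real.cos x = 2 * Real.cos (x/2)^2 - 1 := by rw [← this]; ring_nf
  linarith

/-- Gronwall-type positivity: if deriv u ≥ -C u on (0,T) and u 0 > 0 then u T > 0. -/
lemma gronwall_pos {u : ℝ → ℝ} {C T : ℝ} (hC : 0 ≤ C) (hT : 0 ≤ T)
    (hu : Differentiable ℝ u)
    (hd : ∀ t ∈ Set.Ioo (0:ℝ) T, -C * u t ≤ deriv u t) (h0 : 0 < u 0) : 0 < u T := by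
  rcases eq_or_lt_of_le hT with h|hTpos
  · rwa [← h]
  set g : ℝ → ℝ := fun t => u t * Real.exp (C * t) with hg
  have hgd : ∀ t, HasDerivAt g ((deriv u t + C * u t) * Real.exp (C*t)) t := by
    intro t
    have h1 : HasDerivAt u (deriv u t) t := (hu t).hasDerivAt
    have h2 : HasDerivAt (fun t => Real.exp (C*t)) (Real.exp (C*t) * C) t := by
      have := (Real.hasDerivAt_exp (C*t)).comp t ((hasDerivAt_id t).const_mul C)
      exact this.congr_deriv (by ring)
    have := h1.mul h2
    refine this.congr_deriv ?_; ring
  have hmono : MonotoneOn g (Set.Icc 0 T) := by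
    apply monotoneOn_of_deriv_nonneg (convex_Icc 0 T)
    · exact Continuous.continuousOn (by
        exact (hu.continuous.mul (Real.continuous_exp.comp (continuous_const.mul continuous_id))))
    · intro t ht
      exact (hgd t).differentiableAt.differentiableWithinAt
    · intro t ht
      rw [interior_Icc] at ht
      rw [(hgd t).deriv]
      have := hd t ht
      have hexp : 0 < Real.exp (C*t) := Real.exp_pos _
      nlinarith
  have h01 : g 0 ≤ g T := hmono (by constructor <;> [rfl; exact hT]) (by constructor <;> [exact hT; rfl]) hT
  have hg0 : g 0 = u 0 := by simp [hg]
  have hgT : 0 < g T := by rw [hg0] at h01; linarith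
  simp only [hg] at hgT
  have hexp : 0 < Real.exp (C*T) := Real.exp_pos _
  nlinarith [hgT]


/-- The quadratic bounds on the radial velocity squared, from the key identity. -/
lemma key_bounds (a b v y w : ℝ) (hb : 0 < b) (hab : b < a)
    (hk : y ^ 2 * (a + b * Real.cos (w / b)) ^ 2
      = v ^ 2 * ((a + b * Real.cos (w / b)) ^ 2 - (a - b) ^ 2)) :
    y ^ 2 * (b * (a - b) ^ 2) ≤ v ^ 2 * a * (Real.pi * b - w) ^ 2 ∧
    y ^ 2 * (b * (a - b) ^ 2) ≤ v ^ 2 * a * (w + Real.pi * b) ^ 2 := by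
  have hb' : b ≠ 0 := ne_of_gt hb
  have ha : (0:ℝ) < a := lt_trans hb hab
  have hQlb : a - b ≤ a + b * Real.cos (w / b) := by
    nlinarith [Real.neg_one_le_cos (w / b)]
  have ti := trig_ident a b (w / b)
  have hk2 : y ^ 2 * (a + b * Real.cos (w / b)) ^ 2
      = v ^ 2 * (4 * b * Real.cos (w / b / 2) ^ 2
        * (a - b * Real.sin (w / b / 2) ^ 2)) := by rw [hk, ti]
  have hs0 : 0 ≤ Real.sin (w / b / 2) ^ 2 := sq_nonneg _
  have hc0 : 0 ≤ Real.cos (w / b / 2) ^ 2 := sq_nonneg _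
  have hQ1 : (a - b) ^ 2 ≤ (a + b * Real.cos (w / b)) ^ 2 :=
    pow_le_pow_left₀ (by linarith) hQlb 2
  have c1 : y ^ 2 * (b * (a - b) ^ 2)
      ≤ b * (y ^ 2 * (a + b * Real.cos (w / b)) ^ 2) := by
    nlinarith [mul_le_mul_of_nonneg_left hQ1 (mul_nonneg hb.le (sq_nonneg y))]
  have c2' : b * (y ^ 2 * (a + b * Real.cos (w / b)) ^ 2)
      = 4 * b ^ 2 * v ^ 2 * (Real.cos (w / b / 2) ^ 2
        * (a - b * Real.sin (w / b / 2) ^ 2)) := by rw [hk2]; ring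
  constructor
  · have hcs : Real.cos (w / b / 2) = Real.sin ((Real.pi * b - w) / (2 * b)) := by
      rw [show (Real.pi * b - w) / (2 * b) = Real.pi / 2 - w / b / 2 by
        field_simp, Real.sin_pi_div_two_sub]
    have hc2 : Real.cos (w / b / 2) ^ 2 ≤ ((Real.pi * b - w) / (2 * b)) ^ 2 := by
      rw [hcs]; exact Real.sin_sq_le_sq
    have c3 : Real.cos (w / b / 2) ^ 2 * (a - b * Real.sin (w / b / 2) ^ 2)
        ≤ ((Real.pi * b - w) / (2 * b)) ^ 2 * a := by
      nlinarith [mul_le_mul_of_nonneg_right hc2 ha.le,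
        mul_nonneg (mul_nonneg hc0 hb.le) hs0]
    have c4 : 4 * b ^ 2 * v ^ 2 * (((Real.pi * b - w) / (2 * b)) ^ 2 * a)
        = v ^ 2 * a * (Real.pi * b - w) ^ 2 := by field_simp; ring
    have c5 := mul_le_mul_of_nonneg_left c3 (by positivity : (0:ℝ) ≤ 4 * b ^ 2 * v ^ 2)
    linarith [c1, c2', c5, c4]
  · have hcs : Real.cos (w / b / 2) = Real.sin ((w + Real.pi * b) / (2 * b)) := by
      rw [show (w + Real.pi * b) / (2 * b) = w / b / 2 + Real.pi / 2 by
        field_simp, Real.sin_add_pi_div_two]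
    have hc2 : Real.cos (w / b / 2) ^ 2 ≤ ((w + Real.pi * b) / (2 * b)) ^ 2 := by
      rw [hcs]; exact Real.sin_sq_le_sq
    have c3 : Real.cos (w / b / 2) ^ 2 * (a - b * Real.sin (w / b / 2) ^ 2)
        ≤ ((w + Real.pi * b) / (2 * b)) ^ 2 * a := by
      nlinarith [mul_le_mul_of_nonneg_right hc2 ha.le,
        mul_nonneg (mul_nonneg hc0 hb.le) hs0]
    have c4 : 4 * b ^ 2 * v ^ 2 * (((w + Real.pi * b) / (2 * b)) ^ 2 * a)
        = v ^ 2 * a * (w + Real.pi * b) ^ 2 := by field_simp; ring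
    have c5 := mul_le_mul_of_nonneg_left c3 (by positivity : (0:ℝ) ≤ 4 * b ^ 2 * v ^ 2)
    linarith [c1, c2', c5, c4]

/-- From `y²·bb ≤ K·u²` and `C²·bb = K` conclude `y ≤ C·u` when `u ≥ 0`. -/
lemma deriv_le_Cu {y bb K C u : ℝ} (hbb : 0 < bb) (hC : 0 ≤ C) (hu : 0 ≤ u)
    (hB : y ^ 2 * bb ≤ K * u ^ 2) (hC2 : C ^ 2 * bb = K) : y ≤ C * u := by
  have hsq : y ^ 2 ≤ (C * u) ^ 2 := by nlinarith
  have h3 := Real.sqrt_le_sqrt hsq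
  rw [Real.sqrt_sq_eq_abs, Real.sqrt_sq (mul_nonneg hC hu)] at h3
  exact le_trans (le_abs_self y) h3

/-- Lower bound for the radial velocity away from the equator. -/
lemma m_le_deriv (a b v y c κ : ℝ) (hb : 0 < b) (hab : b < a)
    (hk : y ^ 2 * (a + b * c) ^ 2 = v ^ 2 * ((a + b * c) ^ 2 - (a - b) ^ 2))
    (hc1 : c ≤ 1) (hκc : κ ≤ c) (hκ : a - b < a + b * κ) (hy : 0 < y) :
    Real.sqrt (v ^ 2 * ((a + b * κ) ^ 2 - (a - b) ^ 2) / (a + b) ^ 2) ≤ y := by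
  have hQκ0 : (0:ℝ) < a + b * κ := by linarith
  have hQs : a + b * κ ≤ a + b * c := by nlinarith
  have hQub : a + b * c ≤ a + b := by nlinarith
  have hM0 : 0 ≤ v ^ 2 * ((a + b * κ) ^ 2 - (a - b) ^ 2) / (a + b) ^ 2 := by
    have h : (a - b) ^ 2 ≤ (a + b * κ) ^ 2 := by nlinarith
    exact div_nonneg (mul_nonneg (sq_nonneg v) (by linarith)) (sq_nonneg _)
  set m := Real.sqrt (v ^ 2 * ((a + b * κ) ^ 2 - (a - b) ^ 2) / (a + b) ^ 2) with hmdef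
  have hm2 : m ^ 2 = v ^ 2 * ((a + b * κ) ^ 2 - (a - b) ^ 2) / (a + b) ^ 2 :=
    Real.sq_sqrt hM0
  have hmnn : 0 ≤ m := Real.sqrt_nonneg _
  have hsq : m ^ 2 ≤ y ^ 2 := by
    have hab2 : (a + b) ≠ 0 := ne_of_gt (by linarith)
    have e1 : m ^ 2 * (a + b) ^ 2 = v ^ 2 * ((a + b * κ) ^ 2 - (a - b) ^ 2) := by
      rw [hm2]; field_simp
    have e0 : (a + b * κ) ^ 2 ≤ (a + b * c) ^ 2 := by nlinarith
    have e2 : v ^ 2 * ((a + b * κ) ^ 2 - (a - b) ^ 2)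
        ≤ v ^ 2 * ((a + b * c) ^ 2 - (a - b) ^ 2) := by
      nlinarith [mul_le_mul_of_nonneg_left e0 (sq_nonneg v)]
    have hQ2ub : (a + b * c) ^ 2 ≤ (a + b) ^ 2 := by nlinarith
    nlinarith [hk, e1, e2, mul_le_mul_of_nonneg_left hQ2ub (sq_nonneg y),
      pow_pos (show (0:ℝ) < a + b by linarith) 2]
  have h3 := Real.sqrt_le_sqrt hsq
  rwa [Real.sqrt_sq hmnn, Real.sqrt_sq hy.le] at h3

set_option maxHeartbeats 1000000 in
/-- Asymptotic approach to the inner equator: at the critical energy level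
ℓ² = (a-b)²v² with r(0) = 0, r'(0) > 0, the radial coordinate increases strictly
on [0,∞), stays in (0, πb), and tends to πb as t → ∞. -/
theorem torus_geodesic_asymptotic_to_inner_equator
    (a b : ℝ) (hb : 0 < b) (hab : b < a)
    (r θ : ℝ → ℝ) (hr : ContDiff ℝ 2 r) (hθ : ContDiff ℝ 2 θ)
    (hgeo : ∀ t : ℝ,
      deriv (deriv r) t =
        -Real.sin (r t / b) * (a + b * Real.cos (r t / b)) * (deriv θ t) ^ 2 ∧
      deriv (deriv θ) t =
        (2 * Real.sin (r t / b) / (a + b * Real.cos (r t / b))) * deriv r t * deriv θ t)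
    (hr0 : r 0 = 0) (hr0' : 0 < deriv r 0)
    (ℓ v : ℝ)
    (hℓ : ℓ = (a + b * Real.cos (r 0 / b)) ^ 2 * deriv θ 0)
    (hv : v = Real.sqrt ((deriv r 0) ^ 2 +
      (a + b * Real.cos (r 0 / b)) ^ 2 * (deriv θ 0) ^ 2))
    (hvpos : 0 < v)
    (hcrit : ℓ ^ 2 = (a - b) ^ 2 * v ^ 2) :
    StrictMonoOn r (Set.Ici (0 : ℝ)) ∧
    (∀ t : ℝ, 0 < t → 0 < r t ∧ r t < Real.pi * b) ∧
    Filter.Tendsto r Filter.atTop (nhds (Real.pi * b)) := by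
  have hb' : b ≠ 0 := ne_of_gt hb
  have hQlb : ∀ t : ℝ, a - b ≤ a + b * Real.cos (r t / b) := by
    intro t; nlinarith [Real.neg_one_le_cos (r t / b)]
  have hQub : ∀ t : ℝ, a + b * Real.cos (r t / b) ≤ a + b := by
    intro t; nlinarith [Real.cos_le_one (r t / b)]
  have hQpos : ∀ t : ℝ, 0 < a + b * Real.cos (r t / b) := by
    intro t; have := hQlb t; linarith
  have hQne : ∀ t : ℝ, a + b * Real.cos (r t / b) ≠ 0 := fun t => ne_of_gt (hQpos t)
  -- differentiability
  have hrd : Differentiable ℝ r := hr.differentiable (by norm_num)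
  have hθd : Differentiable ℝ θ := hθ.differentiable (by norm_num)
  have hrd2 : Differentiable ℝ (deriv r) := by
    have h2 : ContDiff ℝ (1+1) r := by norm_num; exact hr
    exact ((contDiff_succ_iff_deriv.mp h2).2.2).differentiable (by norm_num)
  have hθd2 : Differentiable ℝ (deriv θ) := by
    have h2 : ContDiff ℝ (1+1) θ := by norm_num; exact hθ
    exact ((contDiff_succ_iff_deriv.mp h2).2.2).differentiable (by norm_num)
  have h1 : ∀ t, HasDerivAt r (deriv r t) t := fun t => (hrd t).hasDerivAt
  have hdQ : ∀ t, HasDerivAt (fun s => a + b * Real.cos (r s / b))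
      (-Real.sin (r t / b) * deriv r t) t := by
    intro t
    have c1 : HasDerivAt (fun s => r s / b) (deriv r t / b) t := (h1 t).div_const b
    have c2 := (Real.hasDerivAt_cos (r t / b)).comp t c1
    have c3 := (c2.const_mul b).const_add a
    refine c3.congr_deriv ?_
    field_simp
  -- angular momentum conservation
  have hL : ∀ t, (a + b * Real.cos (r t / b)) ^ 2 * deriv θ t = ℓ := by
    have hLd : ∀ t, HasDerivAt (fun s => (a + b * Real.cos (r s / b)) ^ 2 * deriv θ s) 0 t := by
      intro t
      have p1 := (hdQ t).pow 2
      have p2 : HasDerivAt (deriv θ) (deriv (deriv θ) t) t := (hθd2 t).hasDerivAt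
      have p3 := p1.mul p2
      refine p3.congr_deriv ?_
      rw [(hgeo t).2]
      simp only [Pi.pow_apply]
      have hQ := hQne t
      field_simp
      ring
    have hconst : ∀ t, (fun s => (a + b * Real.cos (r s / b)) ^ 2 * deriv θ s) t
        = (fun s => (a + b * Real.cos (r s / b)) ^ 2 * deriv θ s) 0 :=
      fun t => is_const_of_deriv_eq_zero
        (fun s => (hLd s).differentiableAt) (fun s => (hLd s).deriv) t 0
    intro t
    have := hconst t
    simp only at this
    rw [this, ← hℓ]
  have hθ' : ∀ t, deriv θ t = ℓ / (a + b * Real.cos (r t / b)) ^ 2 := by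
    intro t
    rw [eq_div_iff (pow_ne_zero 2 (hQne t))]
    rw [mul_comm]; exact hL t
  -- energy conservation
  have hE : ∀ t, (deriv r t) ^ 2 +
      (a + b * Real.cos (r t / b)) ^ 2 * (deriv θ t) ^ 2 = v ^ 2 := by
    have hEd : ∀ t, HasDerivAt (fun s => (deriv r s) ^ 2
        + (a + b * Real.cos (r s / b)) ^ 2 * (deriv θ s) ^ 2) 0 t := by
      intro t
      have q1 := ((hrd2 t).hasDerivAt).pow 2
      have q2 := (hdQ t).pow 2
      have q3 := ((hθd2 t).hasDerivAt).pow 2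
      have q4 := q1.add (q2.mul q3)
      refine q4.congr_deriv ?_
      rw [(hgeo t).1, (hgeo t).2]
      simp only [Pi.pow_apply]
      have hQ := hQne t
      field_simp
      ring
    have hconst : ∀ t, (fun s => (deriv r s) ^ 2
        + (a + b * Real.cos (r s / b)) ^ 2 * (deriv θ s) ^ 2) t
        = (fun s => (deriv r s) ^ 2
        + (a + b * Real.cos (r s / b)) ^ 2 * (deriv θ s) ^ 2) 0 :=
      fun t => is_const_of_deriv_eq_zero
        (fun s => (hEd s).differentiableAt) (fun s => (hEd s).deriv) t 0
    intro t
    have h0 := hconst t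
    simp only at h0
    rw [h0, hv, Real.sq_sqrt (by positivity)]
  -- key identity
  have hKey : ∀ t, (deriv r t) ^ 2 * (a + b * Real.cos (r t / b)) ^ 2
      = v ^ 2 * ((a + b * Real.cos (r t / b)) ^ 2 - (a - b) ^ 2) := by
    intro t
    have h := hE t
    rw [hθ' t] at h
    have hQ2 : ((a + b * Real.cos (r t / b)) ^ 2) ≠ 0 := pow_ne_zero 2 (hQne t)
    field_simp [hQne t] at h
    have h2 : (deriv r t ^ 2 * (a + b * Real.cos (r t / b)) ^ 2
        - v ^ 2 * ((a + b * Real.cos (r t / b)) ^ 2 - (a - b) ^ 2))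
        * (a + b * Real.cos (r t / b)) ^ 2 = 0 := by
      linear_combination (a + b * Real.cos (r t / b)) ^ 2 * h - (a + b * Real.cos (r t / b)) ^ 2 * hcrit
    rcases mul_eq_zero.mp h2 with h3 | h3
    · linarith [sub_eq_zero.mp h3]
    · exact absurd h3 hQ2
  -- quadratic bounds near ±πb
  have hBound1 : ∀ t, (deriv r t) ^ 2 * (b * (a - b) ^ 2)
      ≤ v ^ 2 * a * (Real.pi * b - r t) ^ 2 :=
    fun t => (key_bounds a b v (deriv r t) (r t) hb hab (hKey t)).1
  have hBound2 : ∀ t, (deriv r t) ^ 2 * (b * (a - b) ^ 2)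
      ≤ v ^ 2 * a * (r t + Real.pi * b) ^ 2 :=
    fun t => (key_bounds a b v (deriv r t) (r t) hb hab (hKey t)).2
  -- confinement
  have hpib : 0 < Real.pi * b := mul_pos Real.pi_pos hb
  have hInt : ∀ t : ℝ, 0 ≤ t → -(Real.pi * b) < r t ∧ r t < Real.pi * b := by
    have ha : (0:ℝ) < a := lt_trans hb hab
    have habb : (0:ℝ) < b * (a-b)^2 := mul_pos hb (pow_pos (by linarith) 2)
    set C := Real.sqrt (v^2*a/(b*(a-b)^2)) with hCdef
    have hC2 : C^2 = v^2*a/(b*(a-b)^2) := Real.sq_sqrt (by positivity)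
    have hC2' : C^2 * (b*(a-b)^2) = v^2*a := by
      rw [hC2]; field_simp [sub_ne_zero.mpr (ne_of_gt hab)]
    have hCpos : 0 ≤ C := Real.sqrt_nonneg _
    by_contra hcon
    push_neg at hcon
    obtain ⟨t1, ht1, hbad⟩ := hcon
    have ht1S : Real.pi * b ≤ |r t1| := by
      rcases le_or_gt (r t1) (-(Real.pi*b)) with h|h
      · calc Real.pi * b ≤ -(r t1) := by linarith
          _ ≤ |r t1| := neg_le_abs _
      · calc Real.pi * b ≤ r t1 := hbad h
          _ ≤ |r t1| := le_abs_self _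
    set S : Set ℝ := {t | 0 ≤ t} ∩ {t | Real.pi * b ≤ |r t|} with hS
    have hSne : S.Nonempty := ⟨t1, ht1, ht1S⟩
    have hSclosed : IsClosed S :=
      IsClosed.inter (isClosed_le continuous_const continuous_id)
        (isClosed_le continuous_const hrd.continuous.abs)
    have hbdd : BddBelow S := ⟨0, fun x hx => hx.1⟩
    set T := sInf S with hT
    have hTS : T ∈ S := hSclosed.csInf_mem hSne hbdd
    have hT0 : 0 ≤ T := hTS.1
    have hTpos : 0 < T := by
      rcases eq_or_lt_of_le hT0 with h|h
      · exfalso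
        have := hTS.2
        simp only [Set.mem_setOf_eq] at this
        rw [← h, hr0] at this
        simp at this
        linarith
      · exact h
    have hlt : ∀ s, 0 ≤ s → s < T → |r s| < Real.pi * b := by
      intro s hs hsT
      by_contra hcc
      push_neg at hcc
      exact absurd (csInf_le hbdd ⟨hs, hcc⟩) (not_le.mpr hsT)
    have hTS2 : Real.pi * b ≤ |r T| := hTS.2
    rcases le_abs.mp hTS2 with he|he
    · -- r T ≥ πb : use u = πb - r
      have hu : Differentiable ℝ (fun s => Real.pi * b - r s) :=
        (differentiable_const _).sub hrd
      have hderiv : ∀ s, deriv (fun s => Real.pi * b - r s) s = -(deriv r s) := by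
        intro s
        have := ((hasDerivAt_const s (Real.pi*b)).sub (h1 s)).deriv
        simpa using this
      have hgp := gronwall_pos (u := fun s => Real.pi * b - r s) hCpos hT0 hu ?_ ?_
      · have hgp' : 0 < Real.pi * b - r T := hgp
        linarith
      · intro s hsI
        rw [hderiv s]
        show -C * (Real.pi * b - r s) ≤ -(deriv r s)
        have hs0 : (0:ℝ) ≤ Real.pi * b - r s := by
          have := (abs_lt.mp (hlt s hsI.1.le hsI.2)).2
          linarith
        have := deriv_le_Cu habb hCpos hs0 (hBound1 s) hC2'
        linarith
      · show (0:ℝ) < Real.pi * b - r 0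
        rw [hr0]; linarith
    · -- r T ≤ -πb : use u = r + πb
      have hu : Differentiable ℝ (fun s => r s + Real.pi * b) :=
        hrd.add (differentiable_const _)
      have hderiv : ∀ s, deriv (fun s => r s + Real.pi * b) s = deriv r s := by
        intro s
        have := ((h1 s).add (hasDerivAt_const s (Real.pi*b))).deriv
        simpa using this
      have hgp := gronwall_pos (u := fun s => r s + Real.pi * b) hCpos hT0 hu ?_ ?_
      · have hgp' : 0 < r T + Real.pi * b := hgp
        linarith
      · intro s hsI
        rw [hderiv s]
        show -C * (r s + Real.pi * b) ≤ deriv r s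
        have hs0 : (0:ℝ) ≤ r s + Real.pi * b := by
          have := (abs_lt.mp (hlt s hsI.1.le hsI.2)).1
          linarith
        have hB' : (-(deriv r s)) ^ 2 * (b*(a-b)^2) ≤ v^2*a*(r s + Real.pi*b)^2 := by
          have := hBound2 s; nlinarith [this]
        have := deriv_le_Cu habb hCpos hs0 hB' hC2'
        linarith
      · show (0:ℝ) < r 0 + Real.pi * b
        rw [hr0]; linarith
  -- positivity of deriv r on [0,∞)
  have hQgt : ∀ t : ℝ, 0 ≤ t → a - b < a + b * Real.cos (r t / b) := by
    intro t ht
    obtain ⟨hl, hu⟩ := hInt t ht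
    have hx : r t / b / 2 ∈ Set.Ioo (-(Real.pi/2)) (Real.pi/2) := by
      constructor
      · rw [div_div, lt_div_iff₀ (by positivity : (0:ℝ) < b*2)]
        nlinarith
      · rw [div_div, div_lt_iff₀ (by positivity : (0:ℝ) < b*2)]
        nlinarith
    have hcos : 0 < Real.cos (r t / b / 2) := Real.cos_pos_of_mem_Ioo hx
    have := one_add_cos (r t / b)
    nlinarith [mul_pos hb (mul_pos hcos hcos)]
  have hr'pos : ∀ t : ℝ, 0 ≤ t → 0 < deriv r t := by
    have hne : ∀ s, 0 ≤ s → deriv r s ≠ 0 := by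
      intro s hs h0
      have hk := hKey s
      rw [h0] at hk
      have hQ := hQgt s hs
      have hQsq : (a-b)^2 < (a + b * Real.cos (r s / b))^2 := by nlinarith [hQlb s]
      have hv2 : 0 < v^2 := pow_pos hvpos 2
      nlinarith [hk]
    intro t ht
    by_contra hneg
    push_neg at hneg
    have hlt0 : deriv r t < 0 := lt_of_le_of_ne hneg (hne t ht)
    have hIVT := intermediate_value_Icc' ht (hrd2.continuous.continuousOn (s := Set.Icc 0 t))
    have hmem : (0:ℝ) ∈ Set.Icc (deriv r t) (deriv r 0) := ⟨hlt0.le, hr0'.le⟩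
    obtain ⟨s, hsmem, hs0⟩ := hIVT hmem
    exact hne s hsmem.1 hs0
  -- strict monotonicity
  have hmono : StrictMonoOn r (Set.Ici (0:ℝ)) := by
    apply strictMonoOn_of_deriv_pos (convex_Ici 0) hrd.continuous.continuousOn
    intro x hx
    rw [interior_Ici] at hx
    exact hr'pos x (le_of_lt hx)
  refine ⟨hmono, ?_, ?_⟩
  · intro t ht
    constructor
    · have := hmono (Set.self_mem_Ici) (Set.mem_Ici.mpr (le_of_lt ht)) ht
      rwa [hr0] at this
    · exact (hInt t (le_of_lt ht)).2
  · -- tendsto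
    have ha : (0:ℝ) < a := lt_trans hb hab
    rw [Metric.tendsto_atTop]
    intro ε hε
    have hr1 : 0 < r 1 := by
      have := hmono (Set.self_mem_Ici) (Set.mem_Ici.mpr (by norm_num : (0:ℝ) ≤ 1)) one_pos
      rwa [hr0] at this
    have hclaim : ∃ t0 : ℝ, 0 < t0 ∧ Real.pi * b - ε < r t0 := by
      by_contra hcl
      push_neg at hcl
      have hεb : 0 < Real.pi * b - ε := lt_of_lt_of_le hr1 (hcl 1 one_pos)
      set κ := Real.cos ((Real.pi * b - ε) / b) with hκdef
      have hhalf : 0 < Real.cos ((Real.pi * b - ε) / b / 2) := by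
        apply Real.cos_pos_of_mem_Ioo
        constructor
        · rw [div_div, lt_div_iff₀ (by positivity : (0:ℝ) < b*2)]
          nlinarith
        · rw [div_div, div_lt_iff₀ (by positivity : (0:ℝ) < b*2)]
          nlinarith
      have hκ1 : -1 < κ := by
        have := one_add_cos ((Real.pi * b - ε) / b)
        nlinarith [mul_pos hhalf hhalf]
      have hQκ : a - b < a + b * κ := by nlinarith
      have hM : 0 < v^2 * ((a + b*κ)^2 - (a-b)^2) := by
        have : (a-b)^2 < (a + b*κ)^2 := by nlinarith
        nlinarith [pow_pos hvpos 2]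
      set m := Real.sqrt (v^2 * ((a + b*κ)^2 - (a-b)^2) / (a+b)^2) with hmdef
      have hmpos : 0 < m := Real.sqrt_pos.mpr (by positivity)
      have hlb : ∀ s, 0 < s → m ≤ deriv r s := by
        intro s hs
        have h0s : 0 < r s := by
          have := hmono (Set.self_mem_Ici) (Set.mem_Ici.mpr hs.le) hs
          rwa [hr0] at this
        have hle : r s ≤ Real.pi * b - ε := hcl s hs
        have hcc : κ ≤ Real.cos (r s / b) := by
          apply Real.cos_le_cos_of_nonneg_of_le_pi (div_nonneg h0s.le hb.le)
          · rw [div_le_iff₀ hb]; nlinarith [Real.pi_pos]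
          · gcongr
        exact m_le_deriv a b v (deriv r s) (Real.cos (r s / b)) κ hb hab (hKey s)
          (Real.cos_le_one _) hcc hQκ (hr'pos s hs.le)
      -- linear growth
      have hmonoφ : MonotoneOn (fun s => r s - m * s) (Set.Ici 0) := by
        apply monotoneOn_of_deriv_nonneg (convex_Ici 0)
        · exact (hrd.sub ((differentiable_id.const_mul m))).continuous.continuousOn
        · intro x hx
          exact ((hrd x).sub ((differentiableAt_id.const_mul m))).differentiableWithinAt
        · intro x hx
          rw [interior_Ici] at hx
          have hd : deriv (fun s => r s - m * s) x = deriv r x - m := by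
            have := ((h1 x).sub ((hasDerivAt_id x).const_mul m)).deriv
            simp only [mul_one] at this; exact this
          rw [hd]
          linarith [hlb x hx]
      set t2 := (Real.pi * b) / m + 1 with ht2
      have ht2pos : 0 < t2 := by positivity
      have := hmonoφ (Set.self_mem_Ici) (Set.mem_Ici.mpr ht2pos.le) ht2pos.le
      simp only [hr0] at this
      -- r t2 ≥ m * t2 = πb + m > πb  > πb - ε ≥ r t2
      have hrt2 : m * t2 ≤ r t2 := by linarith
      have : Real.pi * b < m * t2 := by
        rw [ht2, mul_add, mul_one, mul_div_cancel₀ _ (ne_of_gt hmpos)]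
        linarith
      linarith [hcl t2 ht2pos]
    obtain ⟨t0, ht0pos, ht0⟩ := hclaim
    refine ⟨t0, fun t htt => ?_⟩
    have htpos : 0 < t := lt_of_lt_of_le ht0pos htt
    have hrle : r t0 ≤ r t := by
      rcases eq_or_lt_of_le htt with h|h
      · rw [h]
      · exact (hmono (Set.mem_Ici.mpr ht0pos.le) (Set.mem_Ici.mpr htpos.le) h).le
    have hub := (hInt t htpos.le).2
    rw [Real.dist_eq, abs_lt]
    constructor <;> [linarith; linarith]
end

section
/- Orbit equation in integral form: let a > b > 0 and let r, θ : ℝ → ℝ be twice continuously differentiable functions satisfying the torus geodesic equations with angular momentum ℓ and speed v > 0. If λ₁ < λ₂ and r'(λ) > 0 for all λ ∈ [λ₁, λ₂], then θ(λ₂) − θ(λ₁) = ∫_{r(λ₁)}^{r(λ₂)} ℓ / ((a + b·cos(ρ/b))²·√(v² − ℓ²/(a + b·cos(ρ/b))²)) dρ. -/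
/-- Orbit equation in integral form: on a segment where r' > 0, the azimuthal advance
equals the orbit integral ∫ ℓ / (R(ρ)² √(v² - ℓ²/R(ρ)²)) dρ between the radii. -/
theorem torus_geodesic_orbit_integral
    (a b : ℝ) (hb : 0 < b) (hab : b < a)
    (r θ : ℝ → ℝ) (hr : ContDiff ℝ 2 r) (hθ : ContDiff ℝ 2 θ)
    (hgeo : ∀ t : ℝ,
      deriv (deriv r) t =
        -Real.sin (r t / b) * (a + b * Real.cos (r t / b)) * (deriv θ t) ^ 2 ∧
      deriv (deriv θ) t =
        (2 * Real.sin (r t / b) / (a + b * Real.cos (r t / b))) * deriv r t * deriv θ t)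
    (ℓ v : ℝ)
    (hℓ : ℓ = (a + b * Real.cos (r 0 / b)) ^ 2 * deriv θ 0)
    (hv : v = Real.sqrt ((deriv r 0) ^ 2 +
      (a + b * Real.cos (r 0 / b)) ^ 2 * (deriv θ 0) ^ 2))
    (hvpos : 0 < v)
    (t₁ t₂ : ℝ) (h12 : t₁ < t₂)
    (hmono : ∀ t ∈ Set.Icc t₁ t₂, 0 < deriv r t) :
    θ t₂ - θ t₁ =
      ∫ ρ in (r t₁)..(r t₂),
        ℓ / ((a + b * Real.cos (ρ / b)) ^ 2 *
          Real.sqrt (v ^ 2 - ℓ ^ 2 / (a + b * Real.cos (ρ / b)) ^ 2)) := by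
  have hRpos : ∀ x : ℝ, 0 < a + b * Real.cos (x / b) := by
    intro x
    nlinarith [Real.neg_one_le_cos (x / b), Real.cos_le_one (x / b)]
  have hrd : Differentiable ℝ r := hr.differentiable (by norm_num)
  have hθd : Differentiable ℝ θ := hθ.differentiable (by norm_num)
  have hr1 : ContDiff ℝ 1 (deriv r) := by
    have h2 : ContDiff ℝ ((1 : ℕ∞) + 1) r := by exact_mod_cast hr
    exact (contDiff_succ_iff_deriv.mp h2).2.2
  have hθ1 : ContDiff ℝ 1 (deriv θ) := by
    have h2 : ContDiff ℝ ((1 : ℕ∞) + 1) θ := by exact_mod_cast hθ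
    exact (contDiff_succ_iff_deriv.mp h2).2.2
  have hrd' : Differentiable ℝ (deriv r) := hr1.differentiable (by norm_num)
  have hθd' : Differentiable ℝ (deriv θ) := hθ1.differentiable (by norm_num)
  -- derivative of the radius function along r
  have hRr : ∀ t, HasDerivAt (fun t => a + b * Real.cos (r t / b))
      (-Real.sin (r t / b) * deriv r t) t := by
    intro t
    have h1 : HasDerivAt (fun t => r t / b) (deriv r t / b) t :=
      (hrd t).hasDerivAt.div_const b
    have h2 : HasDerivAt (fun t => Real.cos (r t / b))
        (-Real.sin (r t / b) * (deriv r t / b)) t :=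
      h1.cos
    have h3 := (h2.const_mul b).const_add a
    refine h3.congr_deriv ?_
    field_simp
  -- conservation of angular momentum
  have hLderiv : ∀ t, HasDerivAt
      (fun t => (a + b * Real.cos (r t / b)) ^ 2 * deriv θ t) 0 t := by
    intro t
    have h1 := ((hRr t).pow 2).mul (hθd' t).hasDerivAt
    refine h1.congr_deriv ?_
    rw [(hgeo t).2]
    have hR0 : a + b * Real.cos (r t / b) ≠ 0 := (hRpos _).ne'
    simp only [Pi.pow_apply]
    field_simp
    ring
  have hL : ∀ t, (a + b * Real.cos (r t / b)) ^ 2 * deriv θ t = ℓ := by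
    intro t
    rw [hℓ]
    exact is_const_of_deriv_eq_zero (fun x => (hLderiv x).differentiableAt)
      (fun x => (hLderiv x).deriv) t 0
  -- conservation of energy
  have hEderiv : ∀ t, HasDerivAt
      (fun t => (deriv r t) ^ 2 + (a + b * Real.cos (r t / b)) ^ 2 * (deriv θ t) ^ 2) 0 t := by
    intro t
    have h1 := ((hrd' t).hasDerivAt.pow 2).add
      (((hRr t).pow 2).mul ((hθd' t).hasDerivAt.pow 2))
    refine h1.congr_deriv ?_
    rw [(hgeo t).2, (hgeo t).1]
    have hR0 : a + b * Real.cos (r t / b) ≠ 0 := (hRpos _).ne'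
    simp only [Pi.pow_apply]
    field_simp
    ring
  have hE : ∀ t, (deriv r t) ^ 2 + (a + b * Real.cos (r t / b)) ^ 2 * (deriv θ t) ^ 2
      = v ^ 2 := by
    intro t
    have hconst := is_const_of_deriv_eq_zero (f := fun t =>
        (deriv r t) ^ 2 + (a + b * Real.cos (r t / b)) ^ 2 * (deriv θ t) ^ 2)
      (fun x => (hEderiv x).differentiableAt) (fun x => (hEderiv x).deriv) t 0
    rw [hconst, hv, Real.sq_sqrt]
    positivity
  -- key pointwise identities on [t₁, t₂]
  have hsqrt : ∀ t, Real.sqrt (v ^ 2 - ℓ ^ 2 / (a + b * Real.cos (r t / b)) ^ 2)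
      = Real.sqrt ((deriv r t) ^ 2) := by
    intro t
    congr 1
    have hR0 : (a + b * Real.cos (r t / b)) ^ 2 ≠ 0 := pow_ne_zero 2 (hRpos _).ne'
    have := hE t
    rw [← hL t]
    field_simp
    nlinarith [hE t]
  have hkey : ∀ t ∈ Set.Icc t₁ t₂,
      Real.sqrt (v ^ 2 - ℓ ^ 2 / (a + b * Real.cos (r t / b)) ^ 2) = deriv r t := by
    intro t ht
    rw [hsqrt t, Real.sqrt_sq (hmono t ht).le]
  -- the integrand as a function of ρ
  set f : ℝ → ℝ := fun ρ => ℓ / ((a + b * Real.cos (ρ / b)) ^ 2 *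
      Real.sqrt (v ^ 2 - ℓ ^ 2 / (a + b * Real.cos (ρ / b)) ^ 2)) with hf
  have huIcc : Set.uIcc t₁ t₂ = Set.Icc t₁ t₂ := Set.uIcc_of_le h12.le
  -- step 1: θ t₂ - θ t₁ = ∫ deriv θ
  have hstep1 : θ t₂ - θ t₁ = ∫ t in t₁..t₂, deriv θ t :=
    (intervalIntegral.integral_deriv_eq_sub (fun x _ => hθd x)
      (hθ1.continuous.intervalIntegrable _ _)).symm
  -- step 2: integrand equality on the interval
  have hstep2 : ∀ t ∈ Set.uIcc t₁ t₂, deriv θ t = deriv r t * f (r t) := by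
    intro t ht
    rw [huIcc] at ht
    rw [hf]
    simp only
    rw [hkey t ht]
    have hR0 : (a + b * Real.cos (r t / b)) ^ 2 ≠ 0 := pow_ne_zero 2 (hRpos _).ne'
    have hr0 : deriv r t ≠ 0 := (hmono t ht).ne'
    have hLt := hL t
    field_simp
    rw [eq_div_iff hR0]
    linear_combination hLt
  -- step 3: change of variables
  have hcov : (∫ t in t₁..t₂, deriv r t * f (r t)) = ∫ ρ in (r t₁)..(r t₂), f ρ := by
    have hg : ∀ x ∈ Set.uIcc t₁ t₂, HasDerivAt r (deriv r x) x :=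
      fun x _ => (hrd x).hasDerivAt
    have hg' : ContinuousOn (deriv r) (Set.uIcc t₁ t₂) := hr1.continuous.continuousOn
    have hfc : ContinuousOn f (r '' Set.uIcc t₁ t₂) := by
      have hRc : Continuous fun ρ : ℝ => (a + b * Real.cos (ρ / b)) ^ 2 :=
        (continuous_const.add (continuous_const.mul
          (Real.continuous_cos.comp (continuous_id.div_const b)))).pow 2
      apply ContinuousOn.div continuousOn_const
      · apply Continuous.continuousOn
        apply hRc.mul
        apply Real.continuous_sqrt.comp
        apply Continuous.sub continuous_const
        exact continuous_const.div hRc fun x => pow_ne_zero 2 (hRpos x).ne'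
      · rintro ρ ⟨s, hs, rfl⟩
        rw [huIcc] at hs
        apply mul_ne_zero (pow_ne_zero 2 (hRpos _).ne')
        rw [hkey s hs]
        exact (hmono s hs).ne'
    have := intervalIntegral.integral_comp_smul_deriv' hg hg' hfc
    simpa [Function.comp] using this
  rw [hstep1, intervalIntegral.integral_congr hstep2, hcov]
end

section
/- On the horn torus all nonradial geodesics are bound: let b > 0 and set R(ρ) = b·(1 + cos(ρ/b)). Let r, θ : ℝ → ℝ be twice continuously differentiable with r(0) = 0, satisfying r''(λ) = −sin(r(λ)/b)·R(r(λ))·θ'(λ)² for all λ and with λ ↦ R(r(λ))²·θ'(λ) constant, equal to ℓ ≠ 0; let v = √(r'(0)² + R(r(0))²·θ'(0)²). Then for all λ ∈ ℝ: b·(1 + cos(r(λ)/b)) ≥ |ℓ|/v > 0, hence cos(r(λ)/b) > −1 and |r(λ)| < π·b; the geodesic never reaches the degenerate inner equator point on the symmetry axis. -/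
/-- On the horn torus R(ρ) = b(1 + cos(ρ/b)), every nonradial geodesic (ℓ ≠ 0)
through the outer equator is bound: b(1 + cos(r/b)) ≥ |ℓ|/v > 0, hence
cos(r/b) > -1 and |r| < πb; it never reaches the degenerate inner equator point. -/
theorem horn_torus_nonradial_geodesics_bound
    (b : ℝ) (hb : 0 < b)
    (r θ : ℝ → ℝ) (hr : ContDiff ℝ 2 r) (hθ : ContDiff ℝ 2 θ)
    (hr0 : r 0 = 0)
    (hrad : ∀ t : ℝ,
      deriv (deriv r) t =
        -Real.sin (r t / b) * (b * (1 + Real.cos (r t / b))) * (deriv θ t) ^ 2)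
    (ℓ : ℝ) (hℓ0 : ℓ ≠ 0)
    (hcons : ∀ t : ℝ, (b * (1 + Real.cos (r t / b))) ^ 2 * deriv θ t = ℓ)
    (v : ℝ)
    (hv : v = Real.sqrt ((deriv r 0) ^ 2 +
      (b * (1 + Real.cos (r 0 / b))) ^ 2 * (deriv θ 0) ^ 2)) :
    ∀ t : ℝ,
      |ℓ| / v ≤ b * (1 + Real.cos (r t / b)) ∧
      0 < |ℓ| / v ∧
      -1 < Real.cos (r t / b) ∧
      |r t| < Real.pi * b := by
  set R : ℝ → ℝ := fun s => b * (1 + Real.cos (r s / b)) with hR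
  have hRs : ∀ s, R s = b * (1 + Real.cos (r s / b)) := fun _ => rfl
  -- positivity of R
  have hRpos : ∀ s, 0 < R s := by
    intro s
    have h1 : 0 ≤ R s := by
      have := Real.neg_one_le_cos (r s / b)
      rw [hRs]; nlinarith
    rcases h1.lt_or_eq with h | h
    · exact h
    · exfalso
      apply hℓ0
      have hc : R s ^ 2 * deriv θ s = ℓ := hcons s
      rw [← hc, ← h]; ring
  -- differentiability
  have hrd : Differentiable ℝ r := hr.differentiable (by norm_num)
  have hr'd : Differentiable ℝ (deriv r) := by
    have := (contDiff_succ_iff_deriv.mp (by exact_mod_cast hr : ContDiff ℝ (1+1) r)).2.2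
    exact this.differentiable (by simp)
  have hθ'd : Differentiable ℝ (deriv θ) := by
    have := (contDiff_succ_iff_deriv.mp (by exact_mod_cast hθ : ContDiff ℝ (1+1) θ)).2.2
    exact this.differentiable (by simp)
  -- derivative of R²
  have hgder : ∀ t, HasDerivAt (fun s => (R s) ^ 2)
      (2 * R t * (-Real.sin (r t / b) * deriv r t)) t := by
    intro t
    have h1 : HasDerivAt (fun s => r s / b) (deriv r t / b) t :=
      (hrd t).hasDerivAt.div_const b
    have h2 : HasDerivAt (fun s => Real.cos (r s / b))
        (-Real.sin (r t / b) * (deriv r t / b)) t :=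
      by have := (Real.hasDerivAt_cos (r t / b)).comp t h1; exact this
    have h3 : HasDerivAt (fun s => b * (1 + Real.cos (r s / b)))
        (b * (-Real.sin (r t / b) * (deriv r t / b))) t :=
      (h2.const_add 1).const_mul b
    have h4 := h3.fun_pow 2
    refine h4.congr_deriv ?_
    rw [hRs]
    field_simp
    ring
  -- θ'' relation
  have hθ'' : ∀ t, 2 * R t * (-Real.sin (r t / b) * deriv r t) * deriv θ t
      + (R t) ^ 2 * deriv (deriv θ) t = 0 := by
    intro t
    have hmul : HasDerivAt (fun s => (R s) ^ 2 * deriv θ s)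
        (2 * R t * (-Real.sin (r t / b) * deriv r t) * deriv θ t
          + (R t) ^ 2 * deriv (deriv θ) t) t :=
      (hgder t).mul (hθ'd t).hasDerivAt
    have hconst : (fun s => (R s) ^ 2 * deriv θ s) = fun _ => ℓ := funext hcons
    rw [hconst] at hmul
    exact ((hasDerivAt_const t ℓ).unique hmul).symm
  -- energy function is constant
  set f : ℝ → ℝ := fun s => (deriv r s) ^ 2 + ℓ * deriv θ s with hf
  have hfder : ∀ t, HasDerivAt f 0 t := by
    intro t
    have h1 : HasDerivAt (fun s => (deriv r s) ^ 2)
        (2 * deriv r t * deriv (deriv r) t) t := by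
      have := ((hr'd t).hasDerivAt).fun_pow 2
      simpa [mul_comm, mul_assoc] using this
    have h2 : HasDerivAt (fun s => ℓ * deriv θ s) (ℓ * deriv (deriv θ) t) t :=
      ((hθ'd t).hasDerivAt).const_mul ℓ
    have h3 := h1.add h2
    have hE := hθ'' t
    have hc : R t ^ 2 * deriv θ t = ℓ := hcons t
    have hval : 2 * deriv r t * (-Real.sin (r t / b) * R t * deriv θ t ^ 2)
        + ℓ * deriv (deriv θ) t = 0 := by
      linear_combination (deriv θ t) * hE - (deriv (deriv θ) t) * hc
    have h5 : 2 * deriv r t * deriv (deriv r) t + ℓ * deriv (deriv θ) t = 0 := by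
      rw [hrad t]; exact hval
    rw [h5] at h3
    exact h3
  have hfdiff : Differentiable ℝ f := fun t => (hfder t).differentiableAt
  have hf0 : ∀ t, deriv f t = 0 := fun t => (hfder t).deriv
  have hfc : ∀ t, f t = f 0 := fun t => is_const_of_deriv_eq_zero hfdiff hf0 t 0
  -- θ' in terms of R
  have hlθ : ∀ t, ℓ * deriv θ t = ℓ ^ 2 / (R t) ^ 2 := by
    intro t
    have hc : R t ^ 2 * deriv θ t = ℓ := hcons t
    have hRt := (hRpos t).ne'
    rw [eq_div_iff (pow_ne_zero 2 hRt)]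
    linear_combination ℓ * hc
  have hℓsq : 0 < ℓ ^ 2 := by positivity
  -- value at 0 and positivity of v
  have hrw : (b * (1 + Real.cos (r 0 / b))) ^ 2 * (deriv θ 0) ^ 2 = ℓ * deriv θ 0 := by
    linear_combination (deriv θ 0) * hcons 0
  have hsum : (deriv r 0) ^ 2 + (b * (1 + Real.cos (r 0 / b))) ^ 2 * (deriv θ 0) ^ 2 = f 0 := by
    rw [hrw]
  have hpos : 0 < f 0 := by
    have hft : f 0 = (deriv r 0) ^ 2 + ℓ * deriv θ 0 := rfl
    rw [hft, hlθ 0]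
    have h1 : 0 < ℓ ^ 2 / (R 0) ^ 2 := by
      apply div_pos hℓsq
      exact pow_pos (hRpos 0) 2
    nlinarith [sq_nonneg (deriv r 0)]
  have hvpos : 0 < v := by
    rw [hv, hsum]
    exact Real.sqrt_pos.mpr hpos
  have hv2 : v ^ 2 = f 0 := by
    rw [hv, hsum, Real.sq_sqrt hpos.le]
  -- main bound
  have hbound : ∀ t, |ℓ| / v ≤ R t := by
    intro t
    have h1 : f t = f 0 := hfc t
    have hft : f t = (deriv r t) ^ 2 + ℓ ^ 2 / (R t) ^ 2 := by
      show (deriv r t) ^ 2 + ℓ * deriv θ t = _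
      rw [hlθ t]
    have hRt := hRpos t
    have key : (deriv r t) ^ 2 + ℓ ^ 2 / (R t) ^ 2 = v ^ 2 := by
      rw [← hft, h1, ← hv2]
    have h2 : ℓ ^ 2 / (R t) ^ 2 ≤ v ^ 2 := by
      linarith [sq_nonneg (deriv r t)]
    have h3 : ℓ ^ 2 ≤ v ^ 2 * (R t) ^ 2 := by
      rw [div_le_iff₀ (by positivity)] at h2
      linarith
    rw [div_le_iff₀ hvpos]
    nlinarith [sq_abs ℓ, abs_nonneg ℓ, mul_pos hRt hvpos]
  -- cos > -1
  have hcosgt : ∀ s, -1 < Real.cos (r s / b) := by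
    intro s
    have := hRpos s
    rw [hRs] at this
    nlinarith
  -- |r t| < π b
  have habs : ∀ t, |r t| < Real.pi * b := by
    intro t
    by_contra h
    push_neg at h
    have hcont : ContinuousOn r (Set.uIcc 0 t) := hrd.continuous.continuousOn
    rcases le_abs.mp h with h1 | h1
    · have hmem : Real.pi * b ∈ Set.uIcc (r 0) (r t) := by
        rw [hr0]
        exact Set.mem_uIcc.mpr (Or.inl ⟨by positivity, h1⟩)
      obtain ⟨s, _, hs⟩ := intermediate_value_uIcc hcont hmem
      have hcs : Real.cos (r s / b) = -1 := by
        rw [hs, mul_div_assoc, div_self hb.ne', mul_one, Real.cos_pi]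
      linarith [hcosgt s]
    · have hmem : -(Real.pi * b) ∈ Set.uIcc (r 0) (r t) := by
        rw [hr0]
        refine Set.mem_uIcc.mpr (Or.inr ⟨by linarith, by nlinarith [Real.pi_pos]⟩)
      obtain ⟨s, _, hs⟩ := intermediate_value_uIcc hcont hmem
      have hcs : Real.cos (r s / b) = -1 := by
        rw [hs, show -(Real.pi * b) / b = -Real.pi by field_simp, Real.cos_neg, Real.cos_pi]
      linarith [hcosgt s]
  intro t
  refine ⟨hbound t, ?_, hcosgt t, habs t⟩
  exact div_pos (abs_pos.mpr hℓ0) hvpos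
end
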